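/- arXiv:1701.01051 — 2 statements merged into one kernel-verified Lean document; each statement's English description precedes it below -/
import Mathlib

section
/- Let B be a basis of A. Then there exists ε₀ > 0 such that for all ε with 0 < ε < ε₀, the shifted cell Z(B) + εAw = {z + εAw : z ∈ Z(B)} contains exactly one point of the form ψ(O) with O a σ-compatible discrete orientation of M; that is, the shifted cell contains a unique point corresponding to a σ-compatible discrete orientation. -/
open Matrix

/-- A signed circuit of a real matrix `A`. -/
def IsCircuitR {r m : ℕ} (A : Matrix (Fin r) (Fin m) ℝ) (C : Fin m → ℝ) : Prop :=
  C ≠ 0 ∧ A.mulVec C = 0 ∧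
    ∀ v : Fin m → ℝ, v ≠ 0 → A.mulVec v = 0 →
      {e | v e ≠ 0} ⊆ {e | C e ≠ 0} → {e | v e ≠ 0} = {e | C e ≠ 0}

/-- A signed cocircuit of a real matrix `A`. -/
def IsCocircuitR {r m : ℕ} (A : Matrix (Fin r) (Fin m) ℝ) (D : Fin m → ℝ) : Prop :=
  D ≠ 0 ∧ (∃ y : Fin r → ℝ, D = Matrix.vecMul y A) ∧
    ∀ v : Fin m → ℝ, v ≠ 0 → (∃ y : Fin r → ℝ, v = Matrix.vecMul y A) →
      {e | v e ≠ 0} ⊆ {e | D e ≠ 0} → {e | v e ≠ 0} = {e | D e ≠ 0}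

/-- A discrete orientation: a function `E → {-1,1}`. -/
def IsOrientationR {m : ℕ} (O : Fin m → ℝ) : Prop := ∀ e, O e = 1 ∨ O e = -1

/-- `O` is σ-compatible: every signed circuit compatible with `O` satisfies `w·C > 0`. -/
def SigmaCompatR {r m : ℕ} (A : Matrix (Fin r) (Fin m) ℝ) (w : Fin m → ℝ)
    (O : Fin m → ℝ) : Prop :=
  ∀ C : Fin m → ℝ, IsCircuitR A C → (∀ e, C e ≠ 0 → O e = Real.sign (C e)) → 0 < w ⬝ᵥ C

/-- `ψ(O) = A·((O+1)/2)`. -/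
noncomputable def psiR {r m : ℕ} (A : Matrix (Fin r) (Fin m) ℝ) (O : Fin m → ℝ) :
    Fin r → ℝ :=
  A.mulVec (fun e => (O e + 1) / 2)

/-- `B ⊆ E` is a basis of `A`: the columns indexed by `B` form a basis of `ℝ^r`. -/
def IsBasisR {r m : ℕ} (A : Matrix (Fin r) (Fin m) ℝ) (B : Finset (Fin m)) : Prop :=
  LinearIndependent ℝ (fun e : B => fun i => A i (e : Fin m)) ∧
  Submodule.span ℝ (Set.range (fun e : B => fun i => A i (e : Fin m))) = ⊤

/-- The fundamental circuit of `e ∉ B` with respect to a basis `B`, normalized so that its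
`e`-th entry is `1`. -/
def FundCircuitR {r m : ℕ} (A : Matrix (Fin r) (Fin m) ℝ) (B : Finset (Fin m)) (e : Fin m)
    (C : Fin m → ℝ) : Prop :=
  IsCircuitR A C ∧ (∀ f, C f ≠ 0 → f ∈ B ∨ f = e) ∧ C e = 1

/-- The closed cell `Z(B)` of the zonotopal subdivision determined by `w`. -/
def ZB {r m : ℕ} (A : Matrix (Fin r) (Fin m) ℝ) (w : Fin m → ℝ) (B : Finset (Fin m)) :
    Set (Fin r → ℝ) :=
  {z | ∃ x : Fin m → ℝ, (∀ e, x e ∈ Set.Icc (0 : ℝ) 1) ∧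
    (∀ e ∉ B, ∀ C : Fin m → ℝ, FundCircuitR A B e C →
      (0 < w ⬝ᵥ C → x e = 1) ∧ (w ⬝ᵥ C < 0 → x e = 0)) ∧
    z = A.mulVec x}

section Circuits
variable {r m : ℕ} (A : Matrix (Fin r) (Fin m) ℝ)

open Classical in
noncomputable def suppF {m : ℕ} (v : Fin m → ℝ) : Finset (Fin m) :=
  Finset.univ.filter (fun e => v e ≠ 0)

lemma mem_suppF {m : ℕ} (v : Fin m → ℝ) (e : Fin m) : e ∈ suppF v ↔ v e ≠ 0 := by
  simp [suppF]

lemma suppF_subset {m : ℕ} {v w : Fin m → ℝ} (h : ∀ e, v e ≠ 0 → w e ≠ 0) :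
    suppF v ⊆ suppF w := by
  intro e he; rw [mem_suppF] at *; exact h e he

/-- L1: there is a circuit whose support is inside the support of any nonzero kernel vector. -/
lemma exists_circuit_subset :
    ∀ n (k : Fin m → ℝ), (suppF k).card ≤ n → A.mulVec k = 0 → k ≠ 0 →
      ∃ C, IsCircuitR A C ∧ ∀ e, C e ≠ 0 → k e ≠ 0 := by
  intro n
  induction n with
  | zero =>
    intro k hcard hker hne
    exfalso
    apply hne
    funext e
    by_contra he
    have : e ∈ suppF k := (mem_suppF k e).2 he
    have := Finset.card_pos.2 ⟨e, this⟩
    omega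
  | succ n ih =>
    intro k hcard hker hne
    by_cases hc : ∀ v : Fin m → ℝ, v ≠ 0 → A.mulVec v = 0 →
        {e | v e ≠ 0} ⊆ {e | k e ≠ 0} → {e | v e ≠ 0} = {e | k e ≠ 0}
    · exact ⟨k, ⟨hne, hker, hc⟩, fun e he => he⟩
    · push_neg at hc
      obtain ⟨v, hv0, hvker, hsub, hne'⟩ := hc
      have hsubF : suppF v ⊆ suppF k := suppF_subset (fun e he => hsub he)
      have hneF : suppF v ≠ suppF k := by
        intro h
        apply hne'
        ext e
        constructor
        · exact fun he => hsub he
        · intro he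
          have : e ∈ suppF v := h ▸ (mem_suppF k e).2 he
          exact (mem_suppF v e).1 this
      have hlt : (suppF v).card < (suppF k).card :=
        Finset.card_lt_card (ssubset_of_subset_of_ne hsubF hneF)
      obtain ⟨C, hC, hCs⟩ := ih v (by omega) hvker hv0
      exact ⟨C, hC, fun e he => hsub (hCs e he)⟩

lemma exists_circuit_subset' (k : Fin m → ℝ) (hker : A.mulVec k = 0) (hne : k ≠ 0) :
    ∃ C, IsCircuitR A C ∧ ∀ e, C e ≠ 0 → k e ≠ 0 :=
  exists_circuit_subset A (suppF k).card k le_rfl hker hne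

lemma IsCircuitR.neg {C : Fin m → ℝ} (h : IsCircuitR A C) : IsCircuitR A (-C) := by
  obtain ⟨h0, hker, hmin⟩ := h
  refine ⟨fun hc => h0 ?_, by rw [Matrix.mulVec_neg, hker, neg_zero], ?_⟩
  · funext e; have := congrFun hc e; simpa using this
  · intro v hv0 hvker hsub
    have : {e | (-C) e ≠ 0} = {e | C e ≠ 0} := by ext e; simp
    rw [this] at hsub ⊢
    exact hmin v hv0 hvker hsub

/-- Elimination step. -/
lemma elim_step (k C : Fin m → ℝ) (hkC : ∀ e, C e ≠ 0 → k e ≠ 0)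
    (hne : ∃ e, 0 < C e * k e) :
    ∃ t : ℝ, 0 < t ∧ (∀ e, k e - t * C e ≠ 0 → 0 < (k e - t * C e) * k e) ∧
      (∃ e, k e ≠ 0 ∧ k e - t * C e = 0) ∧ (∀ e, k e = 0 → k e - t * C e = 0) := by
  classical
  obtain ⟨e₁, he₁⟩ := hne
  have hTne : (Finset.univ.filter (fun e => 0 < C e * k e)).Nonempty :=
    ⟨e₁, by simp [he₁]⟩
  obtain ⟨e₀, he₀mem, he₀min⟩ :=
    Finset.exists_min_image _ (fun e => k e / C e) hTne
  have he₀ : 0 < C e₀ * k e₀ := by simpa using he₀mem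
  have hCe₀ : C e₀ ≠ 0 := fun h => by simp [h] at he₀
  set t := k e₀ / C e₀ with ht_def
  have ht : 0 < t := div_pos_iff.2 (by rcases mul_pos_iff.1 he₀ with ⟨h1,h2⟩|⟨h1,h2⟩
                                       · exact Or.inl ⟨h2, h1⟩
                                       · exact Or.inr ⟨h2, h1⟩)
  refine ⟨t, ht, ?_, ⟨e₀, ?_, ?_⟩, ?_⟩
  · intro e hne0
    by_cases hC : C e = 0
    · have hk : k e ≠ 0 := by simpa [hC] using hne0
      have : k e - t * C e = k e := by simp [hC]
      rw [this]
      exact mul_self_pos.2 hk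
    · have hk : k e ≠ 0 := hkC e hC
      by_cases hpos : 0 < C e * k e
      · have hmin : t ≤ k e / C e := he₀min e (by simp [hpos])
        have h1 : t * (C e * k e) ≤ (k e / C e) * (C e * k e) :=
          mul_le_mul_of_nonneg_right hmin (le_of_lt hpos)
        have h2 : (k e / C e) * (C e * k e) = k e * k e := by field_simp
        have hge : 0 ≤ (k e - t * C e) * k e := by nlinarith
        exact lt_of_le_of_ne hge (Ne.symm (mul_ne_zero hne0 hk))
      · have hlt : C e * k e < 0 :=
          lt_of_le_of_ne (not_lt.1 hpos) (mul_ne_zero hC hk)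
        nlinarith [mul_self_pos.2 hk, mul_pos ht (neg_pos.2 hlt)]
  · exact hkC e₀ hCe₀
  · rw [ht_def, div_mul_cancel₀ (k e₀) hCe₀, sub_self]
  · intro e hk
    have : C e = 0 := by by_contra h; exact hkC e h hk
    simp [hk, this]
end Circuits


section Conformal
variable {r m : ℕ} (A : Matrix (Fin r) (Fin m) ℝ)

/-- L2: conformal circuit through a kernel vector. -/
lemma exists_conformal_circuit :
    ∀ n (k : Fin m → ℝ), (suppF k).card ≤ n → A.mulVec k = 0 → k ≠ 0 →
      ∃ C, IsCircuitR A C ∧ ∀ e, C e ≠ 0 → 0 < C e * k e := by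
  intro n
  induction n with
  | zero =>
    intro k hcard hker hne
    exfalso; apply hne; funext e; by_contra he
    have := Finset.card_pos.2 ⟨e, (mem_suppF k e).2 he⟩
    omega
  | succ n ih =>
    intro k hcard hker hne
    obtain ⟨C₀, hC₀, hC₀s⟩ := exists_circuit_subset' A k hker hne
    by_cases hconf : ∀ e, C₀ e ≠ 0 → 0 < C₀ e * k e
    · exact ⟨C₀, hC₀, hconf⟩
    by_cases hanti : ∀ e, C₀ e ≠ 0 → C₀ e * k e < 0
    · refine ⟨-C₀, hC₀.neg A, fun e he => ?_⟩
      have hC : C₀ e ≠ 0 := by simpa using he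
      have := hanti e hC
      simp only [Pi.neg_apply]
      nlinarith
    · push_neg at hconf hanti
      obtain ⟨eneg, henegC, heneg⟩ := hconf
      obtain ⟨epos, heposC, hepos⟩ := hanti
      have heneg' : C₀ eneg * k eneg < 0 :=
        lt_of_le_of_ne heneg (mul_ne_zero henegC (hC₀s eneg henegC))
      have hepos' : 0 < C₀ epos * k epos :=
        lt_of_le_of_ne hepos (Ne.symm (mul_ne_zero heposC (hC₀s epos heposC)))
      obtain ⟨t, ht, hconf', ⟨e₀, hke₀, hzero⟩, hzsupp⟩ :=
        elim_step k C₀ hC₀s ⟨epos, hepos'⟩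
      set k' : Fin m → ℝ := fun e => k e - t * C₀ e with hk'def
      have hk'eneg : 0 < k' eneg * k eneg := by
        have hk : k eneg ≠ 0 := hC₀s eneg henegC
        simp only [hk'def]
        nlinarith [mul_self_pos.2 hk, mul_pos ht (neg_pos.2 heneg')]
      have hk'ne : k' ≠ 0 := by
        intro h
        rw [h] at hk'eneg
        simp at hk'eneg
      have hk'ker : A.mulVec k' = 0 := by
        have : k' = k - t • C₀ := by funext e; simp [hk'def, smul_eq_mul]
        rw [this, Matrix.mulVec_sub, Matrix.mulVec_smul, hker, hC₀.2.1]
        simp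
      have hsub : suppF k' ⊆ suppF k := by
        intro e he
        rw [mem_suppF] at *
        intro hke
        exact he (hzsupp e hke)
      have hcard' : (suppF k').card ≤ n := by
        have hlt : (suppF k').card < (suppF k).card := by
          apply Finset.card_lt_card
          refine ssubset_of_subset_of_ne hsub (fun h => ?_)
          have : e₀ ∈ suppF k' := h ▸ (mem_suppF k e₀).2 hke₀
          rw [mem_suppF] at this
          exact this hzero
        omega
      obtain ⟨C, hC, hCc⟩ := ih k' hcard' hk'ker hk'ne
      refine ⟨C, hC, fun e he => ?_⟩
      have h1 : 0 < C e * k' e := hCc e he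
      have hk'e : k' e ≠ 0 := fun h => by simp [h] at h1
      have h2 : 0 < k' e * k e := hconf' e hk'e
      nlinarith [mul_pos h1 h2, sq_nonneg (k' e)]

lemma exists_conformal_circuit' (k : Fin m → ℝ) (hker : A.mulVec k = 0) (hne : k ≠ 0) :
    ∃ C, IsCircuitR A C ∧ ∀ e, C e ≠ 0 → 0 < C e * k e :=
  exists_conformal_circuit A (suppF k).card k le_rfl hker hne

/-- L3: conformal circuit with negative weight through a kernel vector of negative weight. -/
lemma exists_conformal_circuit_neg (w : Fin m → ℝ) :
    ∀ n (k : Fin m → ℝ), (suppF k).card ≤ n → A.mulVec k = 0 → k ≠ 0 → w ⬝ᵥ k < 0 →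
      ∃ C, IsCircuitR A C ∧ (∀ e, C e ≠ 0 → 0 < C e * k e) ∧ w ⬝ᵥ C < 0 := by
  intro n
  induction n with
  | zero =>
    intro k hcard hker hne hwk
    exfalso; apply hne; funext e; by_contra he
    have := Finset.card_pos.2 ⟨e, (mem_suppF k e).2 he⟩
    omega
  | succ n ih =>
    intro k hcard hker hne hwk
    obtain ⟨C, hC, hCc⟩ := exists_conformal_circuit' A k hker hne
    by_cases hwC : w ⬝ᵥ C < 0
    · exact ⟨C, hC, hCc, hwC⟩
    push_neg at hwC
    have hCs : ∀ e, C e ≠ 0 → k e ≠ 0 := by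
      intro e he
      have := hCc e he
      intro h; rw [h] at this; simp at this
    have hCne : ∃ e, C e ≠ 0 := by
      by_contra h
      push_neg at h
      exact hC.1 (funext fun e => h e)
    obtain ⟨e₁, he₁⟩ := hCne
    obtain ⟨t, ht, hconf', ⟨e₀, hke₀, hzero⟩, hzsupp⟩ :=
      elim_step k C hCs ⟨e₁, hCc e₁ he₁⟩
    set k' : Fin m → ℝ := fun e => k e - t * C e with hk'def
    have hk'ker : A.mulVec k' = 0 := by
      have : k' = k - t • C := by funext e; simp [hk'def, smul_eq_mul]
      rw [this, Matrix.mulVec_sub, Matrix.mulVec_smul, hker, hC.2.1]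
      simp
    have hwk' : w ⬝ᵥ k' < 0 := by
      have : k' = k - t • C := by funext e; simp [hk'def, smul_eq_mul]
      rw [this, dotProduct_sub, dotProduct_smul, smul_eq_mul]
      nlinarith [mul_nonneg (le_of_lt ht) hwC]
    have hk'ne : k' ≠ 0 := by
      intro h
      rw [h] at hwk'
      simp at hwk'
    have hsub : suppF k' ⊆ suppF k := by
      intro e he
      rw [mem_suppF] at *
      intro hke
      exact he (hzsupp e hke)
    have hcard' : (suppF k').card ≤ n := by
      have hlt : (suppF k').card < (suppF k).card := by
        apply Finset.card_lt_card
        refine ssubset_of_subset_of_ne hsub (fun h => ?_)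
        have : e₀ ∈ suppF k' := h ▸ (mem_suppF k e₀).2 hke₀
        rw [mem_suppF] at this
        exact this hzero
      omega
    obtain ⟨C', hC', hCc', hwC'⟩ := ih k' hcard' hk'ker hk'ne hwk'
    refine ⟨C', hC', fun e he => ?_, hwC'⟩
    have h1 : 0 < C' e * k' e := hCc' e he
    have hk'e : k' e ≠ 0 := fun h => by simp [h] at h1
    have h2 : 0 < k' e * k e := hconf' e hk'e
    nlinarith [mul_pos h1 h2, sq_nonneg (k' e)]

lemma exists_conformal_circuit_neg' (w : Fin m → ℝ) (k : Fin m → ℝ)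
    (hker : A.mulVec k = 0) (hne : k ≠ 0) (hwk : w ⬝ᵥ k < 0) :
    ∃ C, IsCircuitR A C ∧ (∀ e, C e ≠ 0 → 0 < C e * k e) ∧ w ⬝ᵥ C < 0 :=
  exists_conformal_circuit_neg A w (suppF k).card k le_rfl hker hne hwk

end Conformal

namespace Stmt18Aux
variable {r m : ℕ}

lemma dot_sum {ι : Type*} (w : Fin m → ℝ) (s : Finset ι) (g : ι → Fin m → ℝ) :
    w ⬝ᵥ (∑ e ∈ s, g e) = ∑ e ∈ s, w ⬝ᵥ g e := by
  simp only [dotProduct, Finset.sum_apply, Finset.mul_sum]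
  exact Finset.sum_comm

lemma dot_smul' (w : Fin m → ℝ) (c : ℝ) (v : Fin m → ℝ) :
    w ⬝ᵥ (c • v) = c * (w ⬝ᵥ v) := by
  rw [dotProduct_smul, smul_eq_mul]

lemma mulVec_eq_sum_col (A : Matrix (Fin r) (Fin m) ℝ) (v : Fin m → ℝ) :
    A.mulVec v = ∑ e : Fin m, v e • (fun i => A i e) := by
  funext i
  simp [Matrix.mulVec, dotProduct, Finset.sum_apply, mul_comm]

lemma mulVec_sum {ι : Type*} (A : Matrix (Fin r) (Fin m) ℝ) (s : Finset ι)
    (g : ι → Fin m → ℝ) : A.mulVec (∑ e ∈ s, g e) = ∑ e ∈ s, A.mulVec (g e) := by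
  simp only [← Matrix.mulVecLin_apply, map_sum]

variable (A : Matrix (Fin r) (Fin m) ℝ) (B : Finset (Fin m))

lemma mulVec_iteB (c : Fin m → ℝ) :
    A.mulVec (fun f => if f ∈ B then c f else 0) =
      ∑ f : B, c (↑f) • (fun i => A i (f : Fin m)) := by
  rw [mulVec_eq_sum_col]
  have h1 : (∑ e : Fin m, (if e ∈ B then c e else 0) • (fun i => A i e)) =
      ∑ e ∈ B, c e • (fun i => A i e) := by
    simp only [ite_smul, zero_smul]
    rw [Finset.sum_ite_mem, Finset.univ_inter]
  rw [h1]
  exact (Finset.sum_coe_sort B (fun f => c f • (fun i => A i f))).symm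

noncomputable def bas (hB : IsBasisR A B) : Module.Basis B ℝ (Fin r → ℝ) := Module.Basis.mk hB.1 hB.2.ge

lemma bas_apply (hB : IsBasisR A B) (f : B) : bas A B hB f = fun i => A i (f : Fin m) := Module.Basis.mk_apply _ _ f

lemma kerB (hB : IsBasisR A B) (v : Fin m → ℝ) (hker : A.mulVec v = 0) (hoff : ∀ e ∉ B, v e = 0) :
    v = 0 := by
  classical
  have hv : v = fun f => if f ∈ B then v f else 0 := by
    funext f
    by_cases hf : f ∈ B <;> simp [hf, hoff]
  have h0 : (∑ f : B, v (↑f) • (fun i => A i (f : Fin m))) = 0 := by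
    rw [← mulVec_iteB, ← hv, hker]
  have := Fintype.linearIndependent_iff.1 hB.1 (fun f => v ↑f) h0
  funext e
  by_cases he : e ∈ B
  · exact this ⟨e, he⟩
  · exact hoff e he

noncomputable def CeF (hB : IsBasisR A B) (e : Fin m) : Fin m → ℝ :=
  Pi.single e 1 + fun f =>
    if h : f ∈ B then -((bas A B hB).repr (fun i => A i e) ⟨f, h⟩) else 0

lemma CeF_self (hB : IsBasisR A B) {e : Fin m} (he : e ∉ B) : CeF A B hB e e = 1 := by
  simp [CeF, he]

lemma CeF_offB (hB : IsBasisR A B) {e f : Fin m} (hf : f ∉ B) :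
    CeF A B hB e f = if f = e then 1 else 0 := by
  simp [CeF, hf, Pi.single_apply]

lemma CeF_supp (hB : IsBasisR A B) {e f : Fin m} (hf : CeF A B hB e f ≠ 0) : f ∈ B ∨ f = e := by
  by_cases h : f ∈ B
  · exact Or.inl h
  · rw [CeF_offB A B hB h] at hf
    by_cases h2 : f = e
    · exact Or.inr h2
    · simp [h2] at hf

lemma mulVec_CeF (hB : IsBasisR A B) {e : Fin m} (he : e ∉ B) : A.mulVec (CeF A B hB e) = 0 := by
  classical
  rw [CeF, Matrix.mulVec_add, Matrix.mulVec_single]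
  have hfun : (fun f => if h : f ∈ B then
        -((bas A B hB).repr (fun i => A i e) ⟨f, h⟩) else 0) =
      (fun f => if hf : f ∈ B then
        (fun g => if hg : g ∈ B then -((bas A B hB).repr (fun i => A i e) ⟨g, hg⟩) else 0) f
        else 0) := by
    funext f; by_cases hf : f ∈ B <;> simp [hf]
  have hite : (fun f => if h : f ∈ B then
        -((bas A B hB).repr (fun i => A i e) ⟨f, h⟩) else 0) =
      (fun f => if f ∈ B then
        (if h : f ∈ B then -((bas A B hB).repr (fun i => A i e) ⟨f, h⟩) else 0) else 0) := by
    funext f; by_cases hf : f ∈ B <;> simp [hf]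
  rw [hite, mulVec_iteB]
  have hterm : ∀ f : B, (if h : (f : Fin m) ∈ B then
        -((bas A B hB).repr (fun i => A i e) ⟨(f : Fin m), h⟩) else 0) •
        (fun i => A i (f : Fin m)) =
      -(((bas A B hB).repr (fun i => A i e) f) • (bas A B hB f)) := by
    intro f
    rw [dif_pos f.2, bas_apply, Subtype.coe_eta, neg_smul]
  rw [Finset.sum_congr rfl (fun f _ => hterm f), Finset.sum_neg_distrib]
  rw [Module.Basis.sum_repr (bas A B hB) (fun i => A i e)]
  funext i
  simp

lemma CeF_circuit (hB : IsBasisR A B) {e : Fin m} (he : e ∉ B) :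
    IsCircuitR A (CeF A B hB e) := by
  refine ⟨?_, mulVec_CeF A B hB he, ?_⟩
  · intro h
    have := congrFun h e
    rw [CeF_self A B hB he] at this
    simp at this
  · intro v hv0 hvker hsub
    have hd : v - v e • CeF A B hB e = 0 := by
      apply kerB A B hB
      · rw [Matrix.mulVec_sub, Matrix.mulVec_smul, hvker, mulVec_CeF A B hB he]
        simp
      · intro f hf
        by_cases hfe : f = e
        · subst hfe
          simp [CeF_self A B hB he]
        · have h1 : CeF A B hB e f = 0 := by
            rw [CeF_offB A B hB hf, if_neg hfe]
          have h2 : v f = 0 := by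
            by_contra h2
            exact (hsub h2) h1
          simp [h1, h2]
    have hvrep : v = v e • CeF A B hB e := sub_eq_zero.mp hd
    have hve : v e ≠ 0 := by
      intro h
      apply hv0
      rw [hvrep, h, zero_smul]
    ext f
    simp only [Set.mem_setOf_eq]
    constructor
    · intro hf
      rw [hvrep] at hf
      simp only [Pi.smul_apply, smul_eq_mul] at hf
      exact fun h => hf (by rw [h, mul_zero])
    · intro hf
      rw [hvrep]
      simp only [Pi.smul_apply, smul_eq_mul]
      exact mul_ne_zero hve hf

lemma CeF_fund (hB : IsBasisR A B) {e : Fin m} (he : e ∉ B) :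
    FundCircuitR A B e (CeF A B hB e) :=
  ⟨CeF_circuit A B hB he, fun f hf => CeF_supp A B hB hf, CeF_self A B hB he⟩

lemma fund_unique (hB : IsBasisR A B) {e : Fin m} (he : e ∉ B) {C : Fin m → ℝ}
    (hC : FundCircuitR A B e C) : C = CeF A B hB e := by
  have hd : C - CeF A B hB e = 0 := by
    apply kerB A B hB
    · rw [Matrix.mulVec_sub, hC.1.2.1, mulVec_CeF A B hB he]
      simp
    · intro f hf
      by_cases hfe : f = e
      · subst hfe
        simp [CeF_self A B hB he, hC.2.2]
      · have h1 : CeF A B hB e f = 0 := by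
          rw [CeF_offB A B hB hf, if_neg hfe]
        have h2 : C f = 0 := by
          by_contra h2
          rcases hC.2.1 f h2 with h | h
          · exact hf h
          · exact hfe h
        simp [h1, h2]
  exact sub_eq_zero.mp hd

lemma ker_rep (hB : IsBasisR A B) (v : Fin m → ℝ) (hker : A.mulVec v = 0) :
    v = ∑ e ∈ Finset.univ \ B, v e • CeF A B hB e := by
  classical
  have hd : v - ∑ e ∈ Finset.univ \ B, v e • CeF A B hB e = 0 := by
    apply kerB A B hB
    · rw [Matrix.mulVec_sub, hker, mulVec_sum]
      have : ∀ e ∈ Finset.univ \ B, A.mulVec (v e • CeF A B hB e) = 0 := by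
        intro e hee
        have he : e ∉ B := (Finset.mem_sdiff.1 hee).2
        rw [Matrix.mulVec_smul, mulVec_CeF A B hB he, smul_zero]
      rw [Finset.sum_congr rfl this]
      simp
    · intro f hf
      have hsum : (∑ e ∈ Finset.univ \ B, v e • CeF A B hB e) f = v f := by
        rw [Finset.sum_apply]
        have hterm : ∀ e ∈ Finset.univ \ B,
            (v e • CeF A B hB e) f = if f = e then v e else 0 := by
          intro e hee
          simp only [Pi.smul_apply, smul_eq_mul]
          rw [CeF_offB A B hB hf]
          by_cases hfe : f = e <;> simp [hfe]
        rw [Finset.sum_congr rfl hterm]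
        have : ∀ e ∈ Finset.univ \ B, (if f = e then v e else 0) =
            (if f = e then v f else 0) := by
          intro e _
          by_cases hfe : f = e <;> simp [hfe]
        rw [Finset.sum_congr rfl this, Finset.sum_ite_eq]
        simp [hf]
      rw [Pi.sub_apply, hsum, sub_self]
  exact sub_eq_zero.mp hd

/-- The linear functional `x ↦ y ⬝ᵥ x`. -/
noncomputable def dotL (y : Fin r → ℝ) : (Fin r → ℝ) →ₗ[ℝ] ℝ where
  toFun x := y ⬝ᵥ x
  map_add' u v := dotProduct_add y u v
  map_smul' c v := by simpa using dotProduct_smul c y v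

lemma vecMul_apply (y : Fin r → ℝ) (g : Fin m) :
    Matrix.vecMul y A g = y ⬝ᵥ (fun i => A i g) := by
  simp [Matrix.vecMul, dotProduct]

lemma rowzero (hB : IsBasisR A B) (y : Fin r → ℝ)
    (h : ∀ g ∈ B, Matrix.vecMul y A g = 0) : Matrix.vecMul y A = 0 := by
  have hle : Submodule.span ℝ (Set.range (fun e : B => fun i => A i (e : Fin m))) ≤
      LinearMap.ker (dotL (r := r) y) := by
    rw [Submodule.span_le]
    rintro x ⟨g, rfl⟩
    simp only [SetLike.mem_coe, LinearMap.mem_ker]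
    have := h g g.2
    rw [vecMul_apply] at this
    exact this
  have htop : ∀ x : Fin r → ℝ, dotL (r := r) y x = 0 := by
    intro x
    have : x ∈ LinearMap.ker (dotL (r := r) y) := by
      apply hle
      rw [hB.2]
      trivial
    exact this
  funext g
  rw [vecMul_apply]
  exact htop (fun i => A i g)

noncomputable def DF (hB : IsBasisR A B) (f : Fin m) : Fin m → ℝ :=
  fun g => if h : f ∈ B then (bas A B hB).repr (fun i => A i g) ⟨f, h⟩ else 0

lemma DF_eq_coord (hB : IsBasisR A B) {f : Fin m} (hf : f ∈ B) (g : Fin m) :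
    DF A B hB f g = (bas A B hB).coord ⟨f, hf⟩ (fun i => A i g) := by
  rw [DF, dif_pos hf, Module.Basis.coord_apply]

lemma DF_self (hB : IsBasisR A B) {f : Fin m} (hf : f ∈ B) : DF A B hB f f = 1 := by
  rw [DF_eq_coord A B hB hf, Module.Basis.coord_apply]
  have : (fun i => A i f) = bas A B hB ⟨f, hf⟩ := (bas_apply A B hB ⟨f, hf⟩).symm
  rw [this, Module.Basis.repr_self]
  simp

lemma DF_B_ne (hB : IsBasisR A B) {f g : Fin m} (hf : f ∈ B) (hg : g ∈ B) (hgf : g ≠ f) :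
    DF A B hB f g = 0 := by
  rw [DF_eq_coord A B hB hf, Module.Basis.coord_apply]
  have : (fun i => A i g) = bas A B hB ⟨g, hg⟩ := (bas_apply A B hB ⟨g, hg⟩).symm
  rw [this, Module.Basis.repr_self]
  rw [Finsupp.single_apply]
  simp only [ite_eq_right_iff]
  intro h
  exact absurd (congrArg Subtype.val h) hgf

lemma DF_row (hB : IsBasisR A B) {f : Fin m} (hf : f ∈ B) :
    ∃ y : Fin r → ℝ, DF A B hB f = Matrix.vecMul y A := by
  classical
  refine ⟨fun i => (bas A B hB).coord ⟨f, hf⟩ (fun j => if i = j then 1 else 0), ?_⟩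
  funext g
  rw [DF_eq_coord A B hB hf, vecMul_apply]
  rw [LinearMap.pi_apply_eq_sum_univ ((bas A B hB).coord ⟨f, hf⟩) (fun i => A i g)]
  simp [dotProduct, smul_eq_mul, mul_comm]

lemma DF_cocircuit (hB : IsBasisR A B) {f : Fin m} (hf : f ∈ B) :
    IsCocircuitR A (DF A B hB f) := by
  refine ⟨?_, DF_row A B hB hf, ?_⟩
  · intro h
    have := congrFun h f
    rw [DF_self A B hB hf] at this
    simp at this
  · intro v hv0 hvrow hsub
    obtain ⟨y', rfl⟩ := hvrow
    obtain ⟨y, hy⟩ := DF_row A B hB hf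
    have hvf : Matrix.vecMul y' A f ≠ 0 := by
      intro hvf
      apply hv0
      apply rowzero A B hB
      intro g hg
      by_cases hgf : g = f
      · rwa [hgf]
      · by_contra hne
        exact (hsub hne) (DF_B_ne A B hB hf hg hgf)
    have hz : Matrix.vecMul (y' - Matrix.vecMul y' A f • y) A = 0 := by
      apply rowzero A B hB
      intro g hg
      rw [Matrix.sub_vecMul, Matrix.smul_vecMul]
      rw [← hy]
      by_cases hgf : g = f
      · subst hgf
        simp [DF_self A B hB hf, smul_eq_mul]
      · have h1 : DF A B hB f g = 0 := DF_B_ne A B hB hf hg hgf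
        have h2 : Matrix.vecMul y' A g = 0 := by
          by_contra hne
          exact (hsub hne) h1
        simp [h1, h2]
    have hz' : Matrix.vecMul y' A - Matrix.vecMul y' A f • DF A B hB f = 0 := by
      rw [hy, ← Matrix.smul_vecMul, ← Matrix.sub_vecMul]
      exact hz
    have hrep := sub_eq_zero.mp hz'
    ext g
    simp only [Set.mem_setOf_eq]
    constructor
    · intro hg
      intro h0
      rw [hrep] at hg
      simp only [Pi.smul_apply, smul_eq_mul] at hg
      exact hg (by rw [h0, mul_zero])
    · intro hg
      rw [hrep]
      simp only [Pi.smul_apply, smul_eq_mul]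
      exact mul_ne_zero hvf hg

lemma mulVec_w_rep (hB : IsBasisR A B) (w : Fin m → ℝ) :
    A.mulVec (fun g => if g ∈ B then w ⬝ᵥ DF A B hB g else 0) = A.mulVec w := by
  classical
  rw [mulVec_iteB]
  have hcoord : ∀ f : B, w ⬝ᵥ DF A B hB (↑f) = (bas A B hB).repr (A.mulVec w) f := by
    intro f
    have hrepr : (bas A B hB).coord f (A.mulVec w) =
        ∑ g : Fin m, w g * ((bas A B hB).coord f (fun i => A i g)) := by
      rw [mulVec_eq_sum_col, map_sum]
      apply Finset.sum_congr rfl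
      intro g _
      rw [_root_.map_smul, smul_eq_mul]
    rw [← Module.Basis.coord_apply, hrepr]
    rw [dotProduct]
    apply Finset.sum_congr rfl
    intro g _
    rw [DF_eq_coord A B hB f.2]
  rw [Finset.sum_congr rfl (fun f _ => by rw [hcoord f])]
  have : ∀ f : B, (bas A B hB).repr (A.mulVec w) f • (fun i => A i (f : Fin m)) =
      (bas A B hB).repr (A.mulVec w) f • bas A B hB f := by
    intro f
    rw [bas_apply]
  rw [Finset.sum_congr rfl (fun f _ => this f)]
  exact Module.Basis.sum_repr (bas A B hB) (A.mulVec w)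

end Stmt18Aux

set_option maxHeartbeats 2000000 in
open Stmt18Aux in
/-- For every basis `B` there is `ε₀ > 0` such that for all `0 < ε < ε₀` the shifted cell
`Z(B) + εAw` contains exactly one point of the form `ψ(O)` for a σ-compatible discrete
orientation `O`. -/
theorem stmt18 {r m : ℕ} (A : Matrix (Fin r) (Fin m) ℝ) (hrank : A.rank = r)
    (w : Fin m → ℝ)
    (hw : ∀ C : Fin m → ℝ, IsCircuitR A C → w ⬝ᵥ C ≠ 0)
    (hwstar : ∀ D : Fin m → ℝ, IsCocircuitR A D → w ⬝ᵥ D ≠ 0)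
    (B : Finset (Fin m)) (hB : IsBasisR A B) :
    ∃ ε₀ > (0 : ℝ), ∀ ε : ℝ, 0 < ε → ε < ε₀ →
      ∃! z : Fin r → ℝ, (∃ z₀ ∈ ZB A w B, z = z₀ + ε • A.mulVec w) ∧
        ∃ O : Fin m → ℝ, IsOrientationR O ∧ SigmaCompatR A w O ∧ psiR A O = z := by
  classical
  have hwC : ∀ e ∉ B, w ⬝ᵥ CeF A B hB e ≠ 0 :=
    fun e he => hw _ (CeF_circuit A B hB he)
  have hwD : ∀ f ∈ B, w ⬝ᵥ DF A B hB f ≠ 0 :=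
    fun f hf => hwstar _ (DF_cocircuit A B hB hf)
  set χ : Fin m → ℝ := fun e => if 0 < w ⬝ᵥ CeF A B hB e then 1 else 0 with hχdef
  set sg : Fin m → ℝ := fun e => if 0 < w ⬝ᵥ CeF A B hB e then 1 else -1 with hsgdef
  set ustar : Fin m → ℝ :=
    fun e => if e ∈ B then (if 0 < w ⬝ᵥ DF A B hB e then 1 else 0) else χ e with hustardef
  set M1 : ℝ := ∑ f ∈ B, |w ⬝ᵥ DF A B hB f| with hM1def
  have hM1 : ∀ f ∈ B, |w ⬝ᵥ DF A B hB f| ≤ M1 := by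
    intro f hf
    rw [hM1def]
    exact Finset.single_le_sum (f := fun g => |w ⬝ᵥ DF A B hB g|) (fun g _ => abs_nonneg _) hf
  have hM0 : 0 ≤ M1 := by
    rw [hM1def]
    exact Finset.sum_nonneg (fun g _ => abs_nonneg _)
  set vals : Finset ℝ := (((Finset.univ \ B).powerset ×ˢ B).image
    (fun p => |∑ e ∈ p.1, sg e * CeF A B hB e p.2|)).filter (fun x => 0 < x) with hvalsdef
  set δ : ℝ := if h : vals.Nonempty then vals.min' h else 1 with hδdef
  have hδpos : 0 < δ := by
    by_cases h : vals.Nonempty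
    · rw [hδdef, dif_pos h]
      have := vals.min'_mem h
      exact (Finset.mem_filter.1 this).2
    · rw [hδdef, dif_neg h]
      norm_num
  have hδle : ∀ S : Finset (Fin m), S ⊆ Finset.univ \ B → ∀ f ∈ B,
      (∑ e ∈ S, sg e * CeF A B hB e f) ≠ 0 →
      δ ≤ |∑ e ∈ S, sg e * CeF A B hB e f| := by
    intro S hS f hf hne
    have hmem : |∑ e ∈ S, sg e * CeF A B hB e f| ∈ vals := by
      rw [hvalsdef]
      refine Finset.mem_filter.2 ⟨Finset.mem_image.2 ⟨(S, f), ?_, rfl⟩, abs_pos.2 hne⟩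
      exact Finset.mem_product.2 ⟨Finset.mem_powerset.2 hS, hf⟩
    have hne' : vals.Nonempty := ⟨_, hmem⟩
    rw [hδdef, dif_pos hne']
    exact Finset.min'_le _ _ hmem
  refine ⟨min (1/(M1+1)) (δ/(M1+1)), lt_min (by positivity) (by positivity), ?_⟩
  intro ε hε hεlt
  have hεM1 : ε * (M1 + 1) < 1 := by
    have h1 : ε < 1/(M1+1) := lt_of_lt_of_le hεlt (min_le_left _ _)
    have h2 : 0 < M1 + 1 := by linarith
    calc ε * (M1+1) < (1/(M1+1)) * (M1+1) := by
          exact mul_lt_mul_of_pos_right h1 h2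
      _ = 1 := by field_simp
  have hεδ1 : ε * (M1 + 1) < δ := by
    have h1 : ε < δ/(M1+1) := lt_of_lt_of_le hεlt (min_le_right _ _)
    have h2 : 0 < M1 + 1 := by linarith
    calc ε * (M1+1) < (δ/(M1+1)) * (M1+1) := mul_lt_mul_of_pos_right h1 h2
      _ = δ := by field_simp
  have hε1 : ∀ f ∈ B, ε * |w ⬝ᵥ DF A B hB f| < 1 := by
    intro f hf
    nlinarith [hM1 f hf, abs_nonneg (w ⬝ᵥ DF A B hB f)]
  have hεδ : ∀ f ∈ B, ε * |w ⬝ᵥ DF A B hB f| < δ := by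
    intro f hf
    nlinarith [hM1 f hf, abs_nonneg (w ⬝ᵥ DF A B hB f)]
  set xstar : Fin m → ℝ :=
    fun e => if e ∈ B then ustar e - ε * (w ⬝ᵥ DF A B hB e) else ustar e with hxstardef
  set Ostar : Fin m → ℝ := fun e => 2 * ustar e - 1 with hOstardef
  have hustar01 : ∀ e, ustar e = 0 ∨ ustar e = 1 := by
    intro e
    rw [hustardef, hχdef]
    dsimp only
    split_ifs <;> simp
  have hustaroff : ∀ e ∉ B, ustar e = χ e := by
    intro e he
    rw [hustardef]
    simp [he]
  have hxstaroff : ∀ e ∉ B, xstar e = χ e := by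
    intro e he
    rw [hxstardef]
    simp only [if_neg he]
    exact hustaroff e he
  have hxstarB : ∀ f ∈ B, xstar f = ustar f - ε * (w ⬝ᵥ DF A B hB f) := by
    intro f hf
    rw [hxstardef]
    simp [hf]
  have hAxstar : A.mulVec ustar = A.mulVec xstar + ε • A.mulVec w := by
    have hsplit : ustar = xstar + ε • (fun g => if g ∈ B then w ⬝ᵥ DF A B hB g else 0) := by
      funext e
      simp only [Pi.add_apply, Pi.smul_apply, smul_eq_mul, hxstardef]
      by_cases he : e ∈ B <;> simp [he] <;> ring
    rw [hsplit, Matrix.mulVec_add, Matrix.mulVec_smul, mulVec_w_rep A B hB w]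
  have hpsi_star : psiR A Ostar = A.mulVec ustar := by
    rw [psiR]
    congr 1
    funext e
    rw [hOstardef]
    ring
  -- orientation facts
  have hOr : IsOrientationR Ostar := by
    intro e
    rcases hustar01 e with h | h <;> simp only [hOstardef] <;> rw [h] <;> norm_num
  -- sigma compatibility of Ostar
  have hSig : SigmaCompatR A w Ostar := by
    intro C hC hcomp
    have hrep := ker_rep A B hB C hC.2.1
    have hwrep : w ⬝ᵥ C = ∑ e ∈ Finset.univ \ B, C e * (w ⬝ᵥ CeF A B hB e) := by
      conv_lhs => rw [hrep]
      rw [dot_sum]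
      exact Finset.sum_congr rfl (fun e _ => dot_smul' w (C e) _)
    have hpos : ∀ e ∈ Finset.univ \ B, C e ≠ 0 → 0 < C e * (w ⬝ᵥ CeF A B hB e) := by
      intro e hee hCe
      have he : e ∉ B := (Finset.mem_sdiff.1 hee).2
      have hOe : Ostar e = Real.sign (C e) := hcomp e hCe
      simp only [hOstardef] at hOe
      rw [hustaroff e he] at hOe
      simp only [hχdef] at hOe
      by_cases hp : 0 < w ⬝ᵥ CeF A B hB e
      · rw [if_pos hp] at hOe
        norm_num at hOe
        rcases lt_trichotomy (C e) 0 with h | h | h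
        · rw [Real.sign_of_neg h] at hOe; norm_num at hOe
        · exact absurd h hCe
        · exact mul_pos h hp
      · have hn : w ⬝ᵥ CeF A B hB e < 0 :=
          lt_of_le_of_ne (not_lt.1 hp) (hwC e he)
        rw [if_neg hp] at hOe
        norm_num at hOe
        rcases lt_trichotomy (C e) 0 with h | h | h
        · exact mul_pos_of_neg_of_neg h hn
        · exact absurd h hCe
        · rw [Real.sign_of_pos h] at hOe; norm_num at hOe
    have hex : ∃ e ∈ Finset.univ \ B, C e ≠ 0 := by
      by_contra hA
      push_neg at hA
      apply hC.1
      apply kerB A B hB C hC.2.1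
      intro e he
      exact hA e (Finset.mem_sdiff.2 ⟨Finset.mem_univ e, he⟩)
    obtain ⟨e₀, he₀, hCe₀⟩ := hex
    rw [hwrep]
    refine Finset.sum_pos' (fun e he => ?_) ⟨e₀, he₀, hpos e₀ he₀ hCe₀⟩
    by_cases hCe : C e = 0
    · simp [hCe]
    · exact le_of_lt (hpos e he hCe)
  -- the candidate point
  refine ⟨psiR A Ostar, ⟨⟨A.mulVec xstar, ⟨xstar, ?_, ?_, rfl⟩, by
      rw [hpsi_star, hAxstar]⟩, Ostar, hOr, hSig, rfl⟩, ?_⟩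
  · -- xstar ∈ [0,1]
    intro e
    rw [Set.mem_Icc]
    by_cases he : e ∈ B
    · rw [hxstarB e he]
      rcases (hwD e he).lt_or_gt with hd | hd
      · have hust : ustar e = 0 := by
          rw [hustardef]; simp [he, not_lt.2 (le_of_lt hd)]
        have habs : |w ⬝ᵥ DF A B hB e| = -(w ⬝ᵥ DF A B hB e) := abs_of_neg hd
        have h1 := hε1 e he
        rw [habs] at h1
        constructor <;> [nlinarith; nlinarith]
      · have hust : ustar e = 1 := by
          rw [hustardef]; simp [he, hd]
        have habs : |w ⬝ᵥ DF A B hB e| = w ⬝ᵥ DF A B hB e := abs_of_pos hd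
        have h1 := hε1 e he
        rw [habs] at h1
        constructor <;> [nlinarith; nlinarith]
    · rw [hxstaroff e he]
      simp only [hχdef]
      split_ifs <;> norm_num
  · -- fundamental circuit condition
    intro e he C hC
    have hCeq : C = CeF A B hB e := fund_unique A B hB he hC
    subst hCeq
    constructor
    · intro hp
      rw [hxstaroff e he]
      simp only [hχdef]
      rw [if_pos hp]
    · intro hn
      rw [hxstaroff e he]
      simp only [hχdef]
      rw [if_neg (not_lt.2 (le_of_lt hn))]
  · -- uniqueness
    rintro z' ⟨⟨z₀, ⟨x, hxIcc, hxfund, hz₀⟩, hz'⟩, O, hO, hOc, hpsiO⟩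
    set u : Fin m → ℝ := fun e => (O e + 1) / 2 with hudef
    have hu : ∀ e, (u e = 0 ∧ O e = -1) ∨ (u e = 1 ∧ O e = 1) := by
      intro e
      rcases hO e with h | h
      · exact Or.inr ⟨by simp only [hudef]; rw [h]; norm_num, h⟩
      · exact Or.inl ⟨by simp only [hudef]; rw [h]; norm_num, h⟩
    have hAu : A.mulVec u = A.mulVec x + ε • A.mulVec w := by
      have : psiR A O = A.mulVec u := rfl
      rw [← this, hpsiO, hz', hz₀]
    have hxoff : ∀ e ∉ B, x e = χ e := by
      intro e he
      have h := hxfund e he (CeF A B hB e) (CeF_fund A B hB he)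
      simp only [hχdef]
      by_cases hp : 0 < w ⬝ᵥ CeF A B hB e
      · rw [if_pos hp]; exact h.1 hp
      · have hn : w ⬝ᵥ CeF A B hB e < 0 := lt_of_le_of_ne (not_lt.1 hp) (hwC e he)
        rw [if_neg hp]; exact h.2 hn
    set k : Fin m → ℝ := fun e => (x e - xstar e) - (u e - ustar e) with hkdef
    have hkker : A.mulVec k = 0 := by
      have hk : k = (x - xstar) - (u - ustar) := by funext e; simp [hkdef]
      rw [hk, Matrix.mulVec_sub, Matrix.mulVec_sub, Matrix.mulVec_sub, hAu, hAxstar]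
      abel
    have hkoff : ∀ e ∉ B, k e = χ e - u e := by
      intro e he
      rw [hkdef]
      simp only
      rw [hxoff e he, hxstaroff e he, hustaroff e he]
      ring
    have hkinfo : ∀ e ∉ B, k e ≠ 0 → (k e = sg e ∧ O e = -(sg e)) := by
      intro e he hne
      rw [hkoff e he] at hne ⊢
      rw [hχdef, hsgdef] at *
      by_cases hp : 0 < w ⬝ᵥ CeF A B hB e
      · simp only [if_pos hp] at hne ⊢
        rcases hu e with ⟨h0, hO0⟩ | ⟨h1, hO1⟩
        · rw [h0]; norm_num; exact hO0
        · rw [h1] at hne; norm_num at hne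
      · simp only [if_neg hp] at hne ⊢
        rcases hu e with ⟨h0, hO0⟩ | ⟨h1, hO1⟩
        · rw [h0] at hne; norm_num at hne
        · rw [h1]; norm_num; exact hO1
    have hkrep : k = ∑ e ∈ Finset.univ \ B, k e • CeF A B hB e :=
      ker_rep A B hB k hkker
    by_cases hk0 : k = 0
    · -- unique case : u = ustar
      have huoff : ∀ e ∉ B, u e = ustar e := by
        intro e he
        have h8 : k e = 0 := by rw [hk0]; rfl
        rw [hkoff e he] at h8
        rw [hustaroff e he]
        linarith
      have huB : ∀ f ∈ B, u f = ustar f := by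
        intro f hf
        have hxf : x f = u f - ε * (w ⬝ᵥ DF A B hB f) := by
          have h5 := hxstarB f hf
          have h6 : k f = (x f - xstar f) - (u f - ustar f) := by rw [hkdef]
          have h7 : k f = 0 := by rw [hk0]; rfl
          linarith
        have hIc := hxIcc f
        rw [Set.mem_Icc] at hIc
        rcases (hwD f hf).lt_or_gt with hd | hd
        · have hust : ustar f = 0 := by
            rw [hustardef]; simp [hf, not_lt.2 (le_of_lt hd)]
          rcases hu f with ⟨h0, _⟩ | ⟨h1, _⟩
          · rw [h0, hust]
          · exfalso
            have h7 := hIc.2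
            rw [hxf, h1] at h7
            nlinarith [mul_neg_of_pos_of_neg hε hd]
        · have hust : ustar f = 1 := by
            rw [hustardef]; simp [hf, hd]
          rcases hu f with ⟨h0, _⟩ | ⟨h1, _⟩
          · exfalso
            have h7 := hIc.1
            rw [hxf, h0] at h7
            nlinarith [mul_pos hε hd]
          · rw [h1, hust]
      have huu : u = ustar := by
        funext e
        by_cases he : e ∈ B
        · exact huB e he
        · exact huoff e he
      have : psiR A O = A.mulVec u := rfl
      rw [← hpsiO, this, huu, ← hpsi_star]
    · -- contradiction case
      exfalso
      have hSne : ∃ e ∈ Finset.univ \ B, k e ≠ 0 := by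
        by_contra hA2
        push_neg at hA2
        apply hk0
        apply kerB A B hB k hkker
        intro e he
        exact hA2 e (Finset.mem_sdiff.2 ⟨Finset.mem_univ e, he⟩)
      have hwk : 0 < w ⬝ᵥ k := by
        have hwrep : w ⬝ᵥ k = ∑ e ∈ Finset.univ \ B, k e * (w ⬝ᵥ CeF A B hB e) := by
          conv_lhs => rw [hkrep]
          rw [dot_sum]
          exact Finset.sum_congr rfl (fun e _ => dot_smul' w (k e) _)
        rw [hwrep]
        have hpos : ∀ e ∈ Finset.univ \ B, k e ≠ 0 → 0 < k e * (w ⬝ᵥ CeF A B hB e) := by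
          intro e hee hne
          have he : e ∉ B := (Finset.mem_sdiff.1 hee).2
          obtain ⟨hks, _⟩ := hkinfo e he hne
          rw [hks, hsgdef]
          by_cases hp : 0 < w ⬝ᵥ CeF A B hB e
          · simp only [if_pos hp]; linarith
          · have hn : w ⬝ᵥ CeF A B hB e < 0 := lt_of_le_of_ne (not_lt.1 hp) (hwC e he)
            simp only [if_neg hp]; nlinarith
        obtain ⟨e₀, he₀, hke₀⟩ := hSne
        refine Finset.sum_pos' (fun e he => ?_) ⟨e₀, he₀, hpos e₀ he₀ hke₀⟩
        by_cases hne : k e = 0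
        · simp [hne]
        · exact le_of_lt (hpos e he hne)
      obtain ⟨C, hC, hCc, hwCneg⟩ := exists_conformal_circuit_neg' A w (-k)
        (by rw [Matrix.mulVec_neg, hkker]; simp) (neg_ne_zero.2 hk0)
        (by rw [dotProduct_neg]; linarith)
      have hcomp : ∀ e, C e ≠ 0 → O e = Real.sign (C e) := by
        intro e hCe
        have h1 : 0 < C e * (-k) e := hCc e hCe
        rw [Pi.neg_apply] at h1
        have hkne : k e ≠ 0 := by
          intro h; rw [h] at h1; simp at h1
        by_cases heB : e ∈ B
        · -- e in B : use the δ bound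
          set S' : Finset (Fin m) := (Finset.univ \ B).filter (fun e' => k e' ≠ 0) with hS'def
          have hkf : k e = ∑ e' ∈ S', sg e' * CeF A B hB e' e := by
            have h2 : k e = ∑ e' ∈ Finset.univ \ B, k e' * CeF A B hB e' e := by
              conv_lhs => rw [hkrep]
              rw [Finset.sum_apply]
              exact Finset.sum_congr rfl (fun e' _ => by simp)
            have h3 : ∑ e' ∈ S', k e' * CeF A B hB e' e =
                ∑ e' ∈ Finset.univ \ B, k e' * CeF A B hB e' e := by
              rw [hS'def]
              apply Finset.sum_filter_of_ne
              intro e' _ hne'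
              intro hke'
              rw [hke'] at hne'
              simp at hne'
            have h4 : ∑ e' ∈ S', k e' * CeF A B hB e' e =
                ∑ e' ∈ S', sg e' * CeF A B hB e' e := by
              apply Finset.sum_congr rfl
              intro e' he'
              rw [hS'def, Finset.mem_filter, Finset.mem_sdiff] at he'
              obtain ⟨⟨_, he'B⟩, hke'⟩ := he'
              rw [(hkinfo e' he'B hke').1]
            rw [h2, ← h3, h4]
          have hδk : δ ≤ |k e| := by
            rw [hkf]
            apply hδle S' (Finset.filter_subset _ _) e heB
            rw [← hkf]
            exact hkne
          have hxf : x e = u e + k e - ε * (w ⬝ᵥ DF A B hB e) := by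
            have h5 := hxstarB e heB
            have h6 : k e = (x e - xstar e) - (u e - ustar e) := by rw [hkdef]
            linarith
          have hεd := hεδ e heB
          have habs : -(|w ⬝ᵥ DF A B hB e|) ≤ w ⬝ᵥ DF A B hB e ∧
              w ⬝ᵥ DF A B hB e ≤ |w ⬝ᵥ DF A B hB e| := ⟨neg_abs_le _, le_abs_self _⟩
          rcases hkne.lt_or_gt with hkneg | hkpos
          · -- k e < 0 : u e = 1, O e = 1, C e > 0
            have habs2 : |k e| = -(k e) := abs_of_neg hkneg
            have hue : u e = 1 := by
              rcases hu e with ⟨h0, _⟩ | ⟨h1, _⟩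
              · exfalso
                have hIc := hxIcc e
                rw [Set.mem_Icc] at hIc
                have hxl := hIc.1
                rw [hxf, h0] at hxl
                nlinarith
              · exact h1
            have hOe : O e = 1 := by
              rcases hu e with ⟨h0, _⟩ | ⟨_, h1⟩
              · rw [h0] at hue; norm_num at hue
              · exact h1
            have hCpos : 0 < C e := by nlinarith
            rw [Real.sign_of_pos hCpos, hOe]
          · -- k e > 0 : u e = 0, O e = -1, C e < 0
            have habs2 : |k e| = k e := abs_of_pos hkpos
            have hue : u e = 0 := by
              rcases hu e with ⟨h0, _⟩ | ⟨h1, _⟩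
              · exact h0
              · exfalso
                have hIc := hxIcc e
                rw [Set.mem_Icc] at hIc
                have hxu := hIc.2
                rw [hxf, h1] at hxu
                nlinarith
            have hOe : O e = -1 := by
              rcases hu e with ⟨_, h0⟩ | ⟨h1, _⟩
              · exact h0
              · rw [h1] at hue; norm_num at hue
            have hCneg : C e < 0 := by nlinarith
            rw [Real.sign_of_neg hCneg, hOe]
        · -- e not in B
          obtain ⟨hks, hOs⟩ := hkinfo e heB hkne
          rw [hOs, hsgdef]
          rw [hks, hsgdef] at h1
          by_cases hp : 0 < w ⬝ᵥ CeF A B hB e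
          · simp only [if_pos hp] at h1 ⊢
            have hCneg : C e < 0 := by nlinarith
            rw [Real.sign_of_neg hCneg]
          · simp only [if_neg hp] at h1 ⊢
            have hCpos : 0 < C e := by nlinarith
            rw [Real.sign_of_pos hCpos]
            norm_num
      have := hOc C hC hcomp
      linarith
end

section
/- For every orientation O of M and every element e ∈ E, exactly one of the following holds: (1) there exists a signed circuit C of M with e in its support such that O(f) = C(f) for every f in the support of C; (2) there exists a signed cocircuit D of M with e in its support such that O(f) = D(f) for every f in the support of D. -/
open Matrix

/-- A vector with all entries in `{-1,0,1}`. -/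
def SignVec {m : ℕ} (C : Fin m → ℤ) : Prop := ∀ e, C e = -1 ∨ C e = 0 ∨ C e = 1

/-- A signed circuit of `A`. -/
def IsCircuit {r m : ℕ} (A : Matrix (Fin r) (Fin m) ℤ) (C : Fin m → ℤ) : Prop :=
  SignVec C ∧ C ≠ 0 ∧ A.mulVec C = 0 ∧
    ∀ v : Fin m → ℤ, v ≠ 0 → A.mulVec v = 0 →
      {e | v e ≠ 0} ⊆ {e | C e ≠ 0} → {e | v e ≠ 0} = {e | C e ≠ 0}

/-- A signed cocircuit of `A`. -/
def IsCocircuit {r m : ℕ} (A : Matrix (Fin r) (Fin m) ℤ) (D : Fin m → ℤ) : Prop :=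
  SignVec D ∧ D ≠ 0 ∧ (∃ y : Fin r → ℤ, D = Matrix.vecMul y A) ∧
    ∀ v : Fin m → ℤ, v ≠ 0 → (∃ y : Fin r → ℤ, v = Matrix.vecMul y A) →
      {e | v e ≠ 0} ⊆ {e | D e ≠ 0} → {e | v e ≠ 0} = {e | D e ≠ 0}

/-- An orientation of the matroid: a function `E → {-1,1}`. -/
def IsOrientation {m : ℕ} (O : Fin m → ℤ) : Prop := ∀ e, O e = 1 ∨ O e = -1

namespace Stmt19

variable {m : ℕ}

/-- orthogonal complement of a set within coordinates `T` -/
def perp (T : Finset (Fin m)) (S : Set (Fin m → ℝ)) : Set (Fin m → ℝ) :=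
  {z | (∀ f ∉ T, z f = 0) ∧ ∀ x ∈ S, z ⬝ᵥ x = 0}

lemma perp.sub {T : Finset (Fin m)} {S : Set (Fin m → ℝ)} {u v : Fin m → ℝ}
    (hu : u ∈ perp T S) (hv : v ∈ perp T S) : u - v ∈ perp T S := by
  refine ⟨fun f hf => by simp [hu.1 f hf, hv.1 f hf], fun x hx => ?_⟩
  rw [sub_dotProduct, hu.2 x hx, hv.2 x hx, sub_zero]

lemma perp.smul {T : Finset (Fin m)} {S : Set (Fin m → ℝ)} {u : Fin m → ℝ} (c : ℝ)
    (hu : u ∈ perp T S) : c • u ∈ perp T S := by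
  refine ⟨fun f hf => by simp [hu.1 f hf], fun x hx => ?_⟩
  rw [smul_dotProduct, hu.2 x hx, smul_zero]

lemma dot_update_zero (z x : Fin m → ℝ) (g : Fin m) :
    Function.update z g 0 ⬝ᵥ x = z ⬝ᵥ x - z g * x g := by
  unfold dotProduct
  rw [← Finset.sum_erase_add _ _ (Finset.mem_univ g), ← Finset.sum_erase_add _
    (fun f => z f * x f) (Finset.mem_univ g)]
  rw [Function.update_self]
  have : ∀ f ∈ Finset.univ.erase g, Function.update z g 0 f * x f = z f * x f := by
    intro f hf
    rw [Function.update_of_ne (Finset.ne_of_mem_erase hf)]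
  rw [Finset.sum_congr rfl this]
  ring

lemma not_mem_erase_iff {T : Finset (Fin m)} {g f : Fin m} (hg : g ∈ T) :
    f ∉ T.erase g ↔ f = g ∨ f ∉ T := by
  rw [Finset.mem_erase]
  by_cases h : f = g <;> by_cases h2 : f ∈ T <;> simp [h, h2, hg]

/-- The key induction step for the Farkas lemma: contraction/deletion of a coordinate. -/
lemma perp_step {T : Finset (Fin m)} {V W : Set (Fin m → ℝ)}
    (hV : V = perp T W) (hW : W = perp T V) {g : Fin m} (hg : g ∈ T) :
    {x ∈ V | x g = 0} = perp (T.erase g) ((fun z => Function.update z g 0) '' W) ∧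
    (fun z => Function.update z g 0) '' W = perp (T.erase g) {x ∈ V | x g = 0} := by
  constructor
  · apply Set.eq_of_subset_of_subset
    · -- V₁ ⊆ perp T' W₁
      rintro x ⟨hxV, hxg⟩
      have hxp : x ∈ perp T W := hV ▸ hxV
      refine ⟨fun f hf => ?_, ?_⟩
      · rcases (not_mem_erase_iff hg).1 hf with rfl | h
        · exact hxg
        · exact hxp.1 f h
      · rintro _ ⟨y, hyW, rfl⟩
        show x ⬝ᵥ Function.update y g 0 = 0
        rw [dotProduct_comm, dot_update_zero, dotProduct_comm, hxp.2 y hyW, hxg]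
        ring
    · -- perp T' W₁ ⊆ V₁
      rintro z ⟨hz1, hz2⟩
      have hzg : z g = 0 := hz1 g (by simp)
      have hzV : z ∈ perp T W := by
        refine ⟨fun f hf => hz1 f ((not_mem_erase_iff hg).2 (Or.inr hf)), fun y hyW => ?_⟩
        have h3 := hz2 (Function.update y g 0) ⟨y, hyW, rfl⟩
        rw [dotProduct_comm, dot_update_zero, dotProduct_comm] at h3
        have : y g * z g = 0 := by rw [hzg]; ring
        rw [mul_comm] at this
        linarith [h3]
      exact ⟨hV ▸ hzV, hzg⟩
  · apply Set.eq_of_subset_of_subset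
    · -- W₁ ⊆ perp T' V₁
      rintro _ ⟨y, hyW, rfl⟩
      have hyp : y ∈ perp T V := hW ▸ hyW
      refine ⟨fun f hf => ?_, ?_⟩
      · show Function.update y g 0 f = 0
        rcases (not_mem_erase_iff hg).1 hf with rfl | h
        · exact Function.update_self _ _ _
        · rw [Function.update_of_ne, hyp.1 f h]
          intro hfg; exact h (hfg ▸ hg)
      · rintro x ⟨hxV, hxg⟩
        show Function.update y g 0 ⬝ᵥ x = 0
        rw [dot_update_zero, hyp.2 x hxV, hxg]; ring
    · -- perp T' V₁ ⊆ W₁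
      rintro z ⟨hz1, hz2⟩
      have hzg : z g = 0 := hz1 g (by simp)
      by_cases hx0 : ∃ x₀ ∈ V, x₀ g ≠ 0
      · obtain ⟨x₀, hx₀V, hx₀g⟩ := hx0
        set c := (z ⬝ᵥ x₀) / (x₀ g) with hc
        have key : ∀ x ∈ V, z ⬝ᵥ x = c * x g := by
          intro x hxV
          have hsub : x - (x g / x₀ g) • x₀ ∈ V := by
            rw [hV]; exact perp.sub (hV ▸ hxV) (perp.smul _ (hV ▸ hx₀V))
          have hsubg : (x - (x g / x₀ g) • x₀) g = 0 := by
            simp only [Pi.sub_apply, Pi.smul_apply, smul_eq_mul]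
            field_simp
            ring
          have h4 := hz2 _ ⟨hsub, hsubg⟩
          rw [dotProduct_sub, dotProduct_smul] at h4
          have : z ⬝ᵥ x = (x g / x₀ g) * (z ⬝ᵥ x₀) := by
            have := h4; simp only [smul_eq_mul] at this; linarith
          rw [this, hc]; field_simp
        have hz' : z - c • (Pi.single g 1 : Fin m → ℝ) ∈ perp T V := by
          refine ⟨fun f hf => ?_, fun x hxV => ?_⟩
          · have hfg : f ≠ g := fun h => hf (h ▸ hg)
            simp [Pi.single_eq_of_ne hfg, hz1 f ((not_mem_erase_iff hg).2 (Or.inr hf))]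
          · rw [sub_dotProduct, smul_dotProduct, single_dotProduct, key x hxV]
            simp
        refine ⟨z - c • (Pi.single g 1 : Fin m → ℝ), hW ▸ hz', ?_⟩
        show Function.update _ g 0 = z
        ext f
        by_cases hfg : f = g
        · subst hfg; rw [Function.update_self, hzg]
        · rw [Function.update_of_ne hfg]
          simp [Pi.single_eq_of_ne hfg]
      · push_neg at hx0
        have hzW : z ∈ perp T V := by
          refine ⟨fun f hf => hz1 f ((not_mem_erase_iff hg).2 (Or.inr hf)), fun x hxV => ?_⟩
          exact hz2 x ⟨hxV, hx0 x hxV⟩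
        refine ⟨z, hW ▸ hzW, ?_⟩
        show Function.update z g 0 = z
        ext f
        by_cases hfg : f = g
        · subst hfg; rw [Function.update_self, hzg]
        · rw [Function.update_of_ne hfg]

end Stmt19

namespace Stmt19

lemma farkas_aux {m : ℕ} (T : Finset (Fin m)) : ∀ (V W : Set (Fin m → ℝ)),
    V = perp T W → W = perp T V → ∀ e ∈ T,
    (∃ x ∈ V, (∀ f, 0 ≤ x f) ∧ 0 < x e) ∨ (∃ y ∈ W, (∀ f, 0 ≤ y f) ∧ 0 < y e) := by
  induction T using Finset.strongInduction with
  | _ T ih =>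
    intro V W hV hW e he
    by_cases hg : ∃ g ∈ T, g ≠ e
    · obtain ⟨g, hgT, hge⟩ := hg
      have hsub : T.erase g ⊂ T := Finset.erase_ssubset hgT
      have heT' : e ∈ T.erase g := Finset.mem_erase.2 ⟨fun h => hge h.symm, he⟩
      obtain ⟨st1, st2⟩ := perp_step hV hW hgT
      rcases ih _ hsub _ _ st1 st2 e heT' with ⟨x, ⟨hxV, _⟩, hx0, hxe⟩ | ⟨_, ⟨y, hyW, rfl⟩, hy0, hye⟩
      · exact Or.inl ⟨x, hxV, hx0, hxe⟩
      · -- have y ∈ W nonneg off g, positive at e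
        have hy0' : ∀ f, f ≠ g → 0 ≤ y f := by
          intro f hfg
          simpa only [Function.update_of_ne hfg] using hy0 f
        have hye' : 0 < y e := by
          simpa only [Function.update_of_ne (fun h : e = g => hge h.symm)] using hye
        obtain ⟨st1', st2'⟩ := perp_step hW hV hgT
        rcases ih _ hsub _ _ st2' st1' e heT'
          with ⟨_, ⟨x, hxV, rfl⟩, hx0, hxe⟩ | ⟨y', ⟨hy'W, _⟩, hy'0, hy'e⟩
        · have hx0' : ∀ f, f ≠ g → 0 ≤ x f := by
            intro f hfg
            simpa only [Function.update_of_ne hfg] using hx0 f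
          have hxe' : 0 < x e := by
            simpa only [Function.update_of_ne (fun h : e = g => hge h.symm)] using hxe
          by_cases hxg : 0 ≤ x g
          · refine Or.inl ⟨x, hxV, fun f => ?_, hxe'⟩
            by_cases hfg : f = g
            · exact hfg ▸ hxg
            · exact hx0' f hfg
          · by_cases hyg : 0 ≤ y g
            · refine Or.inr ⟨y, hyW, fun f => ?_, hye'⟩
              by_cases hfg : f = g
              · exact hfg ▸ hyg
              · exact hy0' f hfg
            · exfalso
              push_neg at hxg hyg
              have hdot : x ⬝ᵥ y = 0 := (hV ▸ hxV : x ∈ perp T W).2 y hyW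
              have hpos : 0 < x ⬝ᵥ y := by
                show 0 < ∑ f, x f * y f
                apply Finset.sum_pos'
                · intro i _
                  by_cases hig : i = g
                  · subst hig; exact le_of_lt (mul_pos_of_neg_of_neg hxg hyg)
                  · exact mul_nonneg (hx0' i hig) (hy0' i hig)
                · exact ⟨e, Finset.mem_univ e, mul_pos hxe' hye'⟩
              rw [hdot] at hpos; exact lt_irrefl 0 hpos
        · exact Or.inr ⟨y', hy'W, hy'0, hy'e⟩
    · push_neg at hg
      by_cases hWe : ∃ y ∈ W, y e ≠ 0
      · obtain ⟨y, hyW, hye⟩ := hWe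
        refine Or.inr ⟨(y e)⁻¹ • y, hW ▸ perp.smul _ (hW ▸ hyW), fun f => ?_, ?_⟩
        · by_cases hfe : f = e
          · subst hfe; simp [inv_mul_cancel₀ hye]
          · have : y f = 0 := (hW ▸ hyW : y ∈ perp T V).1 f (fun hf => hfe (hg f hf))
            simp [this]
        · simp [inv_mul_cancel₀ hye]
      · push_neg at hWe
        refine Or.inl ⟨Pi.single e 1, ?_, fun f => ?_, by simp⟩
        · rw [hV]
          refine ⟨fun f hf => Pi.single_eq_of_ne (fun hfe => hf (by rw [hfe]; exact he)) _, fun y hyW => ?_⟩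
          rw [single_dotProduct, hWe y hyW]; ring
        · by_cases hfe : f = e
          · subst hfe; simp
          · simp [Pi.single_eq_of_ne hfe]

end Stmt19

namespace Stmt19

lemma rows_indep {r m : ℕ} (B : Matrix (Fin r) (Fin m) ℝ) (hr : B.rank = r) :
    ∀ y : Fin r → ℝ, y ᵥ* B = 0 → y = 0 := by
  have hrT : Bᵀ.rank = r := by rw [Matrix.rank_transpose]; exact hr
  have h1 : Module.finrank ℝ (LinearMap.range Bᵀ.mulVecLin) +
      Module.finrank ℝ (LinearMap.ker Bᵀ.mulVecLin) = r := by
    rw [LinearMap.finrank_range_add_finrank_ker]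
    simp [Module.finrank_fin_fun]
  have h2 : Module.finrank ℝ (LinearMap.ker Bᵀ.mulVecLin) = 0 := by
    have : Module.finrank ℝ (LinearMap.range Bᵀ.mulVecLin) = r := hrT
    omega
  have h3 : LinearMap.ker Bᵀ.mulVecLin = ⊥ := Submodule.finrank_eq_zero.mp h2
  intro y hy
  have : y ∈ LinearMap.ker Bᵀ.mulVecLin := by
    rw [LinearMap.mem_ker, Matrix.mulVecLin_apply, Matrix.mulVec_transpose, hy]
  rwa [h3, Submodule.mem_bot] at this

lemma farkas_matrix {r m : ℕ} (B : Matrix (Fin r) (Fin m) ℝ) (hr : B.rank = r) (e : Fin m) :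
    (∃ x, B *ᵥ x = 0 ∧ (∀ f, 0 ≤ x f) ∧ 0 < x e) ∨
    (∃ y : Fin r → ℝ, (∀ f, 0 ≤ (y ᵥ* B) f) ∧ 0 < (y ᵥ* B) e) := by
  set V : Set (Fin m → ℝ) := {x | B *ᵥ x = 0} with hVdef
  set W : Set (Fin m → ℝ) := {w | ∃ y, w = y ᵥ* B} with hWdef
  have hV : V = perp Finset.univ W := by
    apply Set.eq_of_subset_of_subset
    · intro x hx
      refine ⟨fun f hf => absurd (Finset.mem_univ f) hf, ?_⟩
      rintro _ ⟨y, rfl⟩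
      have hx' : B *ᵥ x = 0 := hx
      rw [dotProduct_comm, ← Matrix.dotProduct_mulVec, hx', dotProduct_zero]
    · rintro z ⟨_, hz⟩
      show B *ᵥ z = 0
      funext i
      have := hz ((Pi.single i 1 : Fin r → ℝ) ᵥ* B) ⟨_, rfl⟩
      rw [dotProduct_comm, ← Matrix.dotProduct_mulVec, single_dotProduct, one_mul] at this
      simpa using this
  have hW : W = perp Finset.univ V := by
    apply Set.eq_of_subset_of_subset
    · rintro _ ⟨y, rfl⟩
      refine ⟨fun f hf => absurd (Finset.mem_univ f) hf, fun x hx => ?_⟩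
      rw [← Matrix.dotProduct_mulVec, hx, dotProduct_zero]
    · rintro z ⟨_, hz⟩
      -- the hard direction : z orthogonal to ker B lies in the row space
      set B₂ : Matrix (Fin r ⊕ Unit) (Fin m) ℝ := Matrix.fromRows B (Matrix.replicateRow Unit z) with hB₂
      have hker : LinearMap.ker B₂.mulVecLin = LinearMap.ker B.mulVecLin := by
        apply le_antisymm
        · intro x hx
          rw [LinearMap.mem_ker, Matrix.mulVecLin_apply, Matrix.fromRows_mulVec] at hx
          rw [LinearMap.mem_ker, Matrix.mulVecLin_apply]
          funext i
          have := congr_fun hx (Sum.inl i)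
          simpa using this
        · intro x hx
          rw [LinearMap.mem_ker, Matrix.mulVecLin_apply] at hx
          rw [LinearMap.mem_ker, Matrix.mulVecLin_apply, Matrix.fromRows_mulVec, hx]
          have hzx : z ⬝ᵥ x = 0 := hz x hx
          funext i
          cases i with
          | inl i => simp
          | inr u =>
            simp only [Sum.elim_inr]
            show (Matrix.replicateRow Unit z *ᵥ x) u = 0
            simpa [Matrix.mulVec, Matrix.replicateRow, dotProduct] using hzx
      have hrank2 : B₂.rank = r := by
        have e1 : Module.finrank ℝ (LinearMap.range B₂.mulVecLin) +
            Module.finrank ℝ (LinearMap.ker B₂.mulVecLin) = m := by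
          rw [LinearMap.finrank_range_add_finrank_ker]; simp [Module.finrank_fin_fun]
        have e2 : Module.finrank ℝ (LinearMap.range B.mulVecLin) +
            Module.finrank ℝ (LinearMap.ker B.mulVecLin) = m := by
          rw [LinearMap.finrank_range_add_finrank_ker]; simp [Module.finrank_fin_fun]
        have e3 : Module.finrank ℝ (LinearMap.range B.mulVecLin) = r := hr
        have e4 : B₂.rank = Module.finrank ℝ (LinearMap.range B₂.mulVecLin) := rfl
        rw [hker] at e1
        omega
      have hrank2T : B₂ᵀ.rank = r := by rw [Matrix.rank_transpose]; exact hrank2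
      have hkerT : Module.finrank ℝ (LinearMap.ker B₂ᵀ.mulVecLin) = 1 := by
        have e1 : Module.finrank ℝ (LinearMap.range B₂ᵀ.mulVecLin) +
            Module.finrank ℝ (LinearMap.ker B₂ᵀ.mulVecLin) = r + 1 := by
          rw [LinearMap.finrank_range_add_finrank_ker]
          simp [Module.finrank_pi]
        have e3 : Module.finrank ℝ (LinearMap.range B₂ᵀ.mulVecLin) = r := hrank2T
        omega
      have hne : ∃ c : (Fin r ⊕ Unit) → ℝ, c ∈ LinearMap.ker B₂ᵀ.mulVecLin ∧ c ≠ 0 := by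
        by_contra hcon
        push_neg at hcon
        have : LinearMap.ker B₂ᵀ.mulVecLin = ⊥ := by
          rw [Submodule.eq_bot_iff]
          intro c hc
          by_contra hc0
          exact hc0 (by exact absurd hc (by intro h; exact hc0 (by
            have := hcon c h
            exact this)))
        rw [this] at hkerT
        simp at hkerT
      obtain ⟨c, hc, hc0⟩ := hne
      have hcvm : c ᵥ* B₂ = 0 := by
        rw [LinearMap.mem_ker, Matrix.mulVecLin_apply, Matrix.mulVec_transpose] at hc
        exact hc
      have hsplit : Sum.elim (c ∘ Sum.inl) (c ∘ Sum.inr) = c := by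
        funext i; cases i <;> rfl
      rw [← hsplit, Matrix.sumElim_vecMul_fromRows] at hcvm
      have hrowz : (c ∘ Sum.inr) ᵥ* Matrix.replicateRow Unit z = c (Sum.inr ()) • z := by
        funext f
        simp [Matrix.vecMul, Matrix.replicateRow, dotProduct]
      rw [hrowz] at hcvm
      set t := c (Sum.inr ()) with ht
      by_cases ht0 : t = 0
      · exfalso
        have : (c ∘ Sum.inl) ᵥ* B = 0 := by
          rw [ht0] at hcvm; simpa using hcvm
        have h5 := rows_indep B hr _ this
        apply hc0
        funext i
        cases i with
        | inl i => exact congr_fun h5 i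
        | inr u => cases u; rw [← ht]; exact ht0
      · refine ⟨(-t⁻¹) • (c ∘ Sum.inl), ?_⟩
        rw [Matrix.smul_vecMul]
        have hcb : (c ∘ Sum.inl) ᵥ* B = -(t • z) := by
          have := hcvm
          funext f
          have h6 := congr_fun hcvm f
          simp only [Pi.add_apply, Pi.zero_apply, Pi.smul_apply, smul_eq_mul] at h6
          simp only [Pi.neg_apply, Pi.smul_apply, smul_eq_mul]
          linarith
        rw [hcb]
        funext f
        simp only [Pi.smul_apply, Pi.neg_apply, smul_eq_mul]
        field_simp
  rcases farkas_aux Finset.univ V W hV hW e (Finset.mem_univ e) with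
    ⟨x, hxV, hx0, hxe⟩ | ⟨y, hyW, hy0, hye⟩
  · exact Or.inl ⟨x, hxV, hx0, hxe⟩
  · obtain ⟨yy, rfl⟩ := hyW
    exact Or.inr ⟨yy, hy0, hye⟩

end Stmt19

namespace Stmt19

/-- From any nonnegative solution positive at `e`, extract one of minimal support; it is then
"parallel-minimal": every vector of `U` supported inside it is a scalar multiple of it. -/
lemma exists_minimal_support {m : ℕ} (U : Set (Fin m → ℝ))
    (hsub : ∀ u ∈ U, ∀ v ∈ U, u - v ∈ U) (hsmul : ∀ (c : ℝ), ∀ u ∈ U, c • u ∈ U)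
    (e : Fin m) (x0 : Fin m → ℝ) (hx0 : x0 ∈ U) (h00 : ∀ f, 0 ≤ x0 f) (h0e : 0 < x0 e) :
    ∃ x ∈ U, (∀ f, 0 ≤ x f) ∧ 0 < x e ∧
      ∀ v ∈ U, (∀ f, v f ≠ 0 → x f ≠ 0) → ∃ c : ℝ, v = c • x := by
  classical
  set SS : Set ℕ := {n : ℕ | ∃ x ∈ U, (∀ f, 0 ≤ x f) ∧ 0 < x e ∧
    (Finset.univ.filter (fun f => x f ≠ 0)).card = n} with hSS
  have hPn : SS.Nonempty := ⟨_, ⟨x0, hx0, h00, h0e, rfl⟩⟩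
  have hmem := Nat.sInf_mem hPn
  obtain ⟨x, hxU, hx0', hxe, hcard⟩ := hmem
  refine ⟨x, hxU, hx0', hxe, ?_⟩
  intro v hvU hsupp
  have hxe0 : x e ≠ 0 := ne_of_gt hxe
  -- z is in U, vanishes at e, supported inside supp x
  set z : Fin m → ℝ := x e • v - v e • x with hz
  have hzU : z ∈ U := hsub _ (hsmul _ _ hvU) _ (hsmul _ _ hxU)
  have hze : z e = 0 := by simp [hz]; ring
  have hzsupp : ∀ f, x f = 0 → z f = 0 := by
    intro f hf
    have : v f = 0 := by
      by_contra hv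
      exact (hsupp f hv) hf
    simp [hz, hf, this]
  by_cases hz0 : z = 0
  · refine ⟨v e / x e, ?_⟩
    funext f
    have := congr_fun hz0 f
    simp only [hz, Pi.sub_apply, Pi.smul_apply, smul_eq_mul, Pi.zero_apply] at this ⊢
    have hzf : x e * v f = v e * x f := by have := congr_fun hz0 f; simp [hz] at this; linarith
    field_simp
    linarith [hzf]
  · exfalso
    -- get w ∈ U with a positive coordinate, supported in supp x, vanishing at e
    obtain ⟨g, hg⟩ : ∃ g, z g ≠ 0 := by
      by_contra hcon; push_neg at hcon; exact hz0 (funext hcon)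
    obtain ⟨w, hwU, hwe, hwsupp, hwpos⟩ :
        ∃ w ∈ U, w e = 0 ∧ (∀ f, x f = 0 → w f = 0) ∧ ∃ f, 0 < w f := by
      rcases lt_or_gt_of_ne hg with hneg | hpos
      · refine ⟨(-1 : ℝ) • z, hsmul _ _ hzU, by simp [hze], fun f hf => by simp [hzsupp f hf],
          g, ?_⟩
        simp; linarith
      · exact ⟨z, hzU, hze, hzsupp, g, hpos⟩
    obtain ⟨f0, hf0pos⟩ := hwpos
    set F : Finset (Fin m) := Finset.univ.filter (fun f => 0 < w f) with hF
    have hFne : F.Nonempty := ⟨f0, by simp [hF, hf0pos]⟩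
    obtain ⟨fm, hfmF, hfmmin⟩ := F.exists_min_image (fun f => x f / w f) hFne
    have hwfm : 0 < w fm := by simpa [hF] using hfmF
    have hxfm : 0 < x fm := by
      rcases (hx0' fm).lt_or_eq with h | h
      · exact h
      · exfalso; exact (ne_of_gt hwfm) (hwsupp fm h.symm)
    set t : ℝ := x fm / w fm with htdef
    have htpos : 0 < t := div_pos hxfm hwfm
    set x' : Fin m → ℝ := x - t • w with hx'
    have hx'U : x' ∈ U := hsub _ hxU _ (hsmul _ _ hwU)
    have hx'e : x' e = x e := by simp [hx', hwe]
    have hx'0 : ∀ f, 0 ≤ x' f := by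
      intro f
      simp only [hx', Pi.sub_apply, Pi.smul_apply, smul_eq_mul]
      by_cases hwf : 0 < w f
      · have h6 := hfmmin f (by simp [hF, hwf])
        rw [htdef, div_le_div_iff₀ hwfm hwf] at h6
        have h7 : t * w f ≤ x f := by
          rw [htdef, div_mul_eq_mul_div, div_le_iff₀ hwfm]
          nlinarith [h6]
        linarith
      · push_neg at hwf
        nlinarith [hx0' f, mul_nonpos_of_nonneg_of_nonpos (le_of_lt htpos) hwf]
    have hx'fm : x' fm = 0 := by
      simp only [hx', Pi.sub_apply, Pi.smul_apply, smul_eq_mul, htdef]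
      field_simp
      ring
    have hx'supp : ∀ f, x f = 0 → x' f = 0 := by
      intro f hf
      simp [hx', hf, hwsupp f hf]
    have hsubset : (Finset.univ.filter (fun f => x' f ≠ 0)) ⊂
        (Finset.univ.filter (fun f => x f ≠ 0)) := by
      apply Finset.ssubset_iff_of_subset ?_ |>.2
      · exact ⟨fm, by simp [ne_of_gt hxfm], by simp [hx'fm]⟩
      · intro f hf
        simp only [Finset.mem_filter, Finset.mem_univ, true_and] at hf ⊢
        intro hxf
        exact hf (hx'supp f hxf)
    have hlt : (Finset.univ.filter (fun f => x' f ≠ 0)).card <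
        (Finset.univ.filter (fun f => x f ≠ 0)).card := Finset.card_lt_card hsubset
    have hPx' : (Finset.univ.filter (fun f => x' f ≠ 0)).card ∈ SS :=
      ⟨x', hx'U, hx'0, by rw [hx'e]; exact hxe, rfl⟩
    have h8 : sInf SS ≤ (Finset.univ.filter (fun f => x' f ≠ 0)).card :=
      Nat.sInf_le hPx'
    omega

end Stmt19

namespace Stmt19

lemma mulVec_eq_sum_cols {k n : ℕ} (M : Matrix (Fin k) (Fin n) ℝ) (c : Fin n → ℝ) :
    M *ᵥ c = ∑ j, c j • (fun i => M i j) := by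
  funext i
  rw [Finset.sum_apply]
  simp [Matrix.mulVec, dotProduct, mul_comm]

lemma exists_subfamily {ι : Type*} [Fintype ι] {n : ℕ} (w : ι → (Fin n → ℝ)) {k : ℕ}
    (hk : Module.finrank ℝ (Submodule.span ℝ (Set.range w)) = k) :
    ∃ τ : Fin k → ι, LinearIndependent ℝ (w ∘ τ) ∧
      Submodule.span ℝ (Set.range (w ∘ τ)) = Submodule.span ℝ (Set.range w) := by
  classical
  obtain ⟨s, hsub, hspan, hli⟩ := exists_linearIndependent ℝ (Set.range w)
  have hsfin : s.Finite := (Set.finite_range w).subset hsub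
  haveI : Fintype s := hsfin.fintype
  have hcard : Fintype.card s = k := by
    have h2 := finrank_span_set_eq_card hli
    rw [hspan, hk, Set.toFinset_card] at h2
    exact h2.symm
  have hch : ∀ v : s, ∃ i : ι, w i = (v : Fin n → ℝ) := fun v => hsub v.2
  choose cf hcf using hch
  let eqv : Fin k ≃ s := (Fintype.equivFinOfCardEq hcard).symm
  refine ⟨cf ∘ eqv, ?_, ?_⟩
  · have : w ∘ (cf ∘ eqv) = Subtype.val ∘ eqv := by
      funext j
      exact hcf (eqv j)
    rw [this]
    exact hli.comp eqv eqv.injective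
  · have : Set.range (w ∘ (cf ∘ eqv)) = s := by
      rw [show w ∘ (cf ∘ eqv) = Subtype.val ∘ eqv from funext fun j => hcf (eqv j)]
      rw [Set.range_comp, Set.range_eq_univ.2 eqv.surjective]
      simp
    rw [this, hspan]

lemma exists_row_select {k n : ℕ} (M : Matrix (Fin k) (Fin n) ℝ)
    (h : LinearIndependent ℝ (fun j => (fun i => M i j))) :
    ∃ σ : Fin n → Fin k, IsUnit (M.submatrix σ id).det := by
  have hker : LinearMap.ker M.mulVecLin = ⊥ := by
    rw [Submodule.eq_bot_iff]
    intro c hc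
    rw [LinearMap.mem_ker, Matrix.mulVecLin_apply, mulVec_eq_sum_cols] at hc
    exact funext (Fintype.linearIndependent_iff.mp h c hc)
  have hrk : M.rank = n := by
    have e1 : Module.finrank ℝ (LinearMap.range M.mulVecLin) +
        Module.finrank ℝ (LinearMap.ker M.mulVecLin) = n := by
      rw [LinearMap.finrank_range_add_finrank_ker]; simp [Module.finrank_fin_fun]
    rw [hker] at e1
    simpa [Matrix.rank] using e1
  have hrkT : Mᵀ.rank = n := by rw [Matrix.rank_transpose]; exact hrk
  have htop : LinearMap.range Mᵀ.mulVecLin = ⊤ := by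
    apply Submodule.eq_top_of_finrank_eq
    rw [show Module.finrank ℝ (LinearMap.range Mᵀ.mulVecLin) = Mᵀ.rank from rfl, hrkT]
    simp [Module.finrank_fin_fun]
  have hspan : Submodule.span ℝ (Set.range (fun i => M i)) = ⊤ := by
    have := Matrix.range_mulVecLin Mᵀ
    rw [htop] at this
    exact this.symm
  have hfr : Module.finrank ℝ (Submodule.span ℝ (Set.range (fun i => M i))) = n := by
    rw [hspan, finrank_top]; simp [Module.finrank_fin_fun]
  obtain ⟨τ, hτli, _⟩ := exists_subfamily (fun i => M i) hfr
  refine ⟨τ, ?_⟩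
  have hrows : LinearIndependent ℝ (fun i => (M.submatrix τ id) i) := hτli
  exact (Matrix.isUnit_iff_isUnit_det _).mp (Matrix.linearIndependent_rows_iff_isUnit.mp hrows)

end Stmt19


namespace Stmt19

lemma sign_cases {d : ℤ} (h : d ∈ Set.range SignType.cast) : d = -1 ∨ d = 0 ∨ d = 1 := by
  obtain ⟨s, rfl⟩ := h; cases s <;> simp

lemma cases_sign {d : ℤ} (h : d = -1 ∨ d = 0 ∨ d = 1) : d ∈ Set.range SignType.cast := by
  rcases h with rfl | rfl | rfl
  · exact ⟨SignType.neg, rfl⟩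
  · exact ⟨SignType.zero, rfl⟩
  · exact ⟨SignType.pos, rfl⟩

lemma sum_finset_eq_sum_orderIso {α : Type*} [AddCommMonoid α] {m : ℕ} (S : Finset (Fin m))
    (h : Fin m → α) :
    ∑ f ∈ S, h f = ∑ j : Fin S.card, h ((S.orderIsoOfFin rfl) j : Fin m) := by
  rw [← Finset.sum_coe_sort S h]
  exact (Fintype.sum_equiv (S.orderIsoOfFin rfl).toEquiv _ _ (fun j => rfl)).symm

lemma cast_rowsum {r m : ℕ} (A : Matrix (Fin r) (Fin m) ℤ) (z : Fin m → ℤ) (i : Fin r) :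
    ((∑ f, A i f * z f : ℤ) : ℝ) = ∑ f, (A.map ((↑) : ℤ → ℝ)) i f * ((z f : ℤ) : ℝ) := by
  push_cast
  simp [Matrix.map_apply]

lemma circuit_side {r m : ℕ} (A : Matrix (Fin r) (Fin m) ℤ) (hTU : A.IsTotallyUnimodular)
    (e : Fin m) (x : Fin m → ℝ)
    (hxker : (A.map ((↑) : ℤ → ℝ)) *ᵥ x = 0) (hx0 : ∀ f, 0 ≤ x f) (hxe : 0 < x e)
    (hmin : ∀ v : Fin m → ℝ, (A.map ((↑) : ℤ → ℝ)) *ᵥ v = 0 → (∀ f, v f ≠ 0 → x f ≠ 0) →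
      ∃ c : ℝ, v = c • x) :
    ∃ C : Fin m → ℤ, IsCircuit A C ∧ C e ≠ 0 ∧ ∀ f, C f ≠ 0 → C f = 1 := by
  classical
  set B := A.map ((↑) : ℤ → ℝ) with hB
  have hxe0 : x e ≠ 0 := ne_of_gt hxe
  set S' : Finset (Fin m) := (Finset.univ.filter (fun f => x f ≠ 0)).erase e with hS'
  set s' : ℕ := S'.card with hs'
  set iso := S'.orderIsoOfFin rfl with hiso
  set g' : Fin s' → Fin m := fun j => (iso j : Fin m) with hg'
  have hg'mem : ∀ j, g' j ∈ S' := fun j => (iso j).2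
  have he' : e ∉ S' := Finset.notMem_erase e _
  have hg'ne : ∀ j, g' j ≠ e := fun j h => he' (h ▸ hg'mem j)
  have hxg' : ∀ j, x (g' j) ≠ 0 := by
    intro j
    have := hg'mem j
    rw [hS', Finset.mem_erase, Finset.mem_filter] at this
    exact this.2.2
  have hS'x : ∀ f, f ∉ S' → f ≠ e → x f = 0 := by
    intro f hf hfe
    by_contra hxf
    exact hf (by rw [hS']; exact Finset.mem_erase.2 ⟨hfe, Finset.mem_filter.2 ⟨Finset.mem_univ f, hxf⟩⟩)
  -- columns of B over S' are linearly independent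
  have hcols : LinearIndependent ℝ (fun j => (fun i => (B.submatrix id g') i j)) := by
    rw [Fintype.linearIndependent_iff]
    intro c hc
    set v : Fin m → ℝ := fun f => if hf : f ∈ S' then c (iso.symm ⟨f, hf⟩) else 0 with hv
    have hvg' : ∀ j, v (g' j) = c j := by
      intro j
      rw [hv]
      simp only [hg'mem j, dif_pos]
      congr 1
      exact iso.symm_apply_apply j
    have hvvan : ∀ f, f ∉ S' → v f = 0 := by
      intro f hf; rw [hv]; simp [hf]
    have hBv : B *ᵥ v = 0 := by
      funext i
      show ∑ f, B i f * v f = 0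
      rw [← Finset.sum_subset (Finset.subset_univ S')
        (fun f _ hf => by rw [hvvan f hf, mul_zero])]
      rw [sum_finset_eq_sum_orderIso S' (fun f => B i f * v f)]
      have := congr_fun hc i
      rw [Finset.sum_apply] at this
      simp only [Pi.smul_apply, smul_eq_mul, Pi.zero_apply] at this
      rw [← this]
      apply Finset.sum_congr rfl
      intro j _
      show B i (g' j) * v (g' j) = c j * B.submatrix id g' i j
      rw [hvg' j, Matrix.submatrix_apply]
      exact mul_comm _ _
    obtain ⟨c₀, hc₀⟩ := hmin v hBv (by
      intro f hvf
      have hfS : f ∈ S' := by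
        by_contra hfS
        exact hvf (hvvan f hfS)
      rw [hS', Finset.mem_erase, Finset.mem_filter] at hfS
      exact hfS.2.2)
    have hve : v e = 0 := hvvan e he'
    have hc₀0 : c₀ = 0 := by
      have := congr_fun hc₀ e
      rw [hve] at this
      simp only [Pi.smul_apply, smul_eq_mul] at this
      rcases mul_eq_zero.1 this.symm with h | h
      · exact h
      · exact absurd h hxe0
    intro j
    have := congr_fun hc₀ (g' j)
    rw [hvg' j, hc₀0] at this
    simpa using this
  obtain ⟨σ, hσdet⟩ := exists_row_select (B.submatrix id g') hcols
  have hσdet' : IsUnit (B.submatrix σ g').det := by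
    have : (B.submatrix id g').submatrix σ id = B.submatrix σ g' := by
      rw [Matrix.submatrix_submatrix]; rfl
    rwa [this] at hσdet
  -- integer Cramer data
  set N : Matrix (Fin s') (Fin s') ℤ := A.submatrix σ g' with hN
  have hNmap : N.map ((↑) : ℤ → ℝ) = B.submatrix σ g' := by
    funext i j; simp [hN, hB, Matrix.map_apply]
  set d : ℤ := N.det with hd
  have hdcast : ((d : ℤ) : ℝ) = (B.submatrix σ g').det := by
    rw [hd, ← hNmap]
    exact (RingHom.map_det (Int.castRingHom ℝ) N)
  have hd0 : d ≠ 0 := by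
    intro h
    rw [h] at hdcast
    exact hσdet'.ne_zero (by rw [← hdcast]; norm_num)
  have hdsign : d = -1 ∨ d = 1 := by
    have := sign_cases ((Matrix.isTotallyUnimodular_iff A).mp hTU s' σ g')
    rcases this with h | h | h
    · exact Or.inl h
    · exact absurd h hd0
    · exact Or.inr h
  have hdd : d * d = 1 := by rcases hdsign with h | h <;> rw [h] <;> norm_num
  set b : Fin s' → ℤ := fun i => A (σ i) e with hb
  set c : Fin s' → ℤ := N.cramer (-b) with hc
  set z : Fin m → ℤ := fun f =>
    if f = e then d else if hf : f ∈ S' then c (iso.symm ⟨f, hf⟩) else 0 with hz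
  have hze : z e = d := by rw [hz]; simp
  have hzg' : ∀ j, z (g' j) = c j := by
    intro j
    have h1 : z (g' j) =
        if g' j = e then d else if hf : g' j ∈ S' then c (iso.symm ⟨g' j, hf⟩) else 0 := rfl
    rw [h1, if_neg (hg'ne j), dif_pos (hg'mem j)]
    rw [show (⟨g' j, hg'mem j⟩ : {a // a ∈ S'}) = iso j from Subtype.ext rfl,
      iso.symm_apply_apply]
  have hzvan : ∀ f, f ≠ e → f ∉ S' → z f = 0 := by
    intro f hfe hfS
    have h1 : z f = if f = e then d else if hf : f ∈ S' then c (iso.symm ⟨f, hf⟩) else 0 := rfl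
    rw [h1, if_neg hfe, dif_neg hfS]
  -- entries of z are signs
  have hzsign : ∀ f, z f ∈ Set.range SignType.cast := by
    intro f
    by_cases hfe : f = e
    · subst hfe; rw [hze]; exact cases_sign (by rcases hdsign with h | h <;> simp [h])
    by_cases hfS : f ∈ S'
    · have : z f = c (iso.symm ⟨f, hfS⟩) := by
        have h1 : z f = if f = e then d else if hf : f ∈ S' then c (iso.symm ⟨f, hf⟩) else 0 := rfl
        rw [h1, if_neg hfe, dif_pos hfS]
      rw [this, hc]
      set j := iso.symm ⟨f, hfS⟩
      have hcj : N.cramer (-b) j = (N.updateCol j (-b)).det := Matrix.cramer_apply N (-b) j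
      have hneg : (N.updateCol j (-b)).det = -(N.updateCol j b).det := by
        have : (-b) = (-1 : ℤ) • b := by funext i; simp
        rw [this, Matrix.det_updateCol_smul]
        ring
      have hupd : N.updateCol j b = A.submatrix σ (Function.update g' j e) := by
        funext i j'
        rw [Matrix.updateCol_apply]
        by_cases hj' : j' = j
        · subst hj'; simp [hb, Function.update_self]
        · simp [hj', hN, Function.update_of_ne hj']
      rw [hcj, hneg, hupd]
      apply cases_sign
      have := sign_cases ((Matrix.isTotallyUnimodular_iff A).mp hTU s' σ (Function.update g' j e))
      rcases this with h | h | h <;> rw [h] <;> norm_num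
    · rw [hzvan f hfe hfS]; exact ⟨SignType.zero, rfl⟩
  -- the sigma-row system is satisfied by z
  have hrowsys : ∀ i : Fin s', ∑ f, A (σ i) f * z f = 0 := by
    intro i
    have hvan : ∀ f, f ∉ insert e S' → A (σ i) f * z f = 0 := by
      intro f hf
      rw [Finset.mem_insert] at hf
      push_neg at hf
      rw [hzvan f hf.1 hf.2, mul_zero]
    rw [← Finset.sum_subset (Finset.subset_univ (insert e S')) (fun f _ hf => hvan f hf)]
    rw [Finset.sum_insert he']
    rw [sum_finset_eq_sum_orderIso S' (fun f => A (σ i) f * z f)]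
    have hstep : ∀ j : Fin s', A (σ i) (g' j) * z (g' j) = N i j * c j := by
      intro j
      rw [hzg' j]; rfl
    rw [Finset.sum_congr rfl (fun j _ => hstep j)]
    have hcram : N *ᵥ c = d • (-b) := by
      rw [hc, hd]
      exact Matrix.mulVec_cramer N (-b)
    have : ∑ j, N i j * c j = (N *ᵥ c) i := rfl
    rw [this, hcram, hze]
    simp [hb]
    ring
  -- real version of z
  set zR : Fin m → ℝ := fun f => ((z f : ℤ) : ℝ) with hzR
  have hzRe : zR e = (d : ℝ) := by rw [hzR]; simp [hze]
  have hdR0 : ((d : ℤ) : ℝ) ≠ 0 := Int.cast_ne_zero.2 hd0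
  -- uniqueness argument
  have huniq : ∀ w : Fin m → ℝ, (∀ f, x f = 0 → w f = 0) →
      (∀ i : Fin s', ∑ f, B (σ i) f * w f = 0) → w e = 0 → w = 0 := by
    intro w hwsupp hwsys hwe
    have hwvan : ∀ f, f ∉ S' → w f = 0 := by
      intro f hf
      by_cases hfe : f = e
      · subst hfe; exact hwe
      · exact hwsupp f (hS'x f hf hfe)
    set cw : Fin s' → ℝ := fun j => w (g' j) with hcw
    have hsys : (B.submatrix σ g') *ᵥ cw = 0 := by
      funext i
      show ∑ j, (B.submatrix σ g') i j * cw j = 0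
      have : ∀ j : Fin s', (B.submatrix σ g') i j * cw j = (fun f => B (σ i) f * w f) (g' j) :=
        fun j => rfl
      rw [Finset.sum_congr rfl (fun j _ => this j)]
      rw [← sum_finset_eq_sum_orderIso S' (fun f => B (σ i) f * w f)]
      rw [Finset.sum_subset (Finset.subset_univ S') (fun f _ hf => by rw [hwvan f hf, mul_zero])]
      exact hwsys i
    have hinj : Function.Injective (B.submatrix σ g').mulVec :=
      Matrix.mulVec_injective_iff_isUnit.2 ((Matrix.isUnit_iff_isUnit_det _).mpr hσdet')
    have hcw0 : cw = 0 := by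
      apply hinj
      rw [hsys]
      simp [Matrix.mulVec_zero]
    funext f
    by_cases hfS : f ∈ S'
    · have : g' (iso.symm ⟨f, hfS⟩) = f := congr_arg Subtype.val (iso.apply_symm_apply ⟨f, hfS⟩)
      have h9 := congr_fun hcw0 (iso.symm ⟨f, hfS⟩)
      rw [hcw] at h9
      simp only [Pi.zero_apply] at h9 ⊢
      rw [← this]
      exact h9
    · simp only [Pi.zero_apply]
      exact hwvan f hfS
  -- zR is parallel to x
  have hxsys : ∀ i : Fin s', ∑ f, B (σ i) f * x f = 0 := by
    intro i
    have := congr_fun hxker (σ i)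
    simpa [Matrix.mulVec, dotProduct, hB] using this
  have hzRsys : ∀ i : Fin s', ∑ f, B (σ i) f * zR f = 0 := by
    intro i
    have := hrowsys i
    have hcast := cast_rowsum A z (σ i)
    rw [this] at hcast
    simp only [Int.cast_zero] at hcast
    rw [← hB] at hcast
    exact hcast.symm
  have hzRsupp : ∀ f, x f = 0 → zR f = 0 := by
    intro f hxf
    have hfe : f ≠ e := fun h => hxe0 (h ▸ hxf)
    have hfS : f ∉ S' := by
      intro hf
      rw [hS', Finset.mem_erase, Finset.mem_filter] at hf
      exact hf.2.2 hxf
    show ((z f : ℤ) : ℝ) = 0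
    rw [hzvan f hfe hfS]
    simp
  have hkey : x e • zR = zR e • x := by
    have hw := huniq (x e • zR - zR e • x)
      (fun f hxf => by simp [hzRsupp f hxf, hxf])
      (fun i => by
        have h1 := hzRsys i
        have h2 := hxsys i
        have : ∀ f, B (σ i) f * (x e • zR - zR e • x) f =
            x e * (B (σ i) f * zR f) - zR e * (B (σ i) f * x f) := by
          intro f; simp only [Pi.sub_apply, Pi.smul_apply, smul_eq_mul]; ring
        rw [Finset.sum_congr rfl (fun f _ => this f), Finset.sum_sub_distrib,
          ← Finset.mul_sum, ← Finset.mul_sum, h1, h2]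
        ring)
      (by show x e * zR e - zR e * x e = 0; ring)
    have := hw
    have h10 : x e • zR - zR e • x = 0 := this
    have := sub_eq_zero.1 h10
    exact this
  have hzRval : ∀ f, zR f = (d : ℝ) * x f / x e := by
    intro f
    have := congr_fun hkey f
    simp only [Pi.smul_apply, smul_eq_mul] at this
    rw [hzRe] at this
    field_simp
    linarith [this]
  -- define C
  set C : Fin m → ℤ := fun f => d * z f with hC
  have hCcast : ∀ f, ((C f : ℤ) : ℝ) = x f / x e := by
    have hdd' : ((d : ℤ) : ℝ) * ((d : ℤ) : ℝ) = 1 := by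
      have h11 : (((d * d : ℤ)) : ℝ) = ((1 : ℤ) : ℝ) := by rw [hdd]
      push_cast at h11
      exact h11
    intro f
    have h1 : ((C f : ℤ) : ℝ) = ((d : ℤ) : ℝ) * zR f := by
      show ((d * z f : ℤ) : ℝ) = _
      push_cast
      rfl
    rw [h1, hzRval f]
    rw [show ((d:ℤ):ℝ) * (((d:ℤ):ℝ) * x f / x e) = (((d:ℤ):ℝ) * ((d:ℤ):ℝ)) * x f / x e
      from by ring, hdd', one_mul]
  have hCe : C e = 1 := by
    show d * z e = 1
    rw [hze]
    exact hdd
  have hCsupp : ∀ f, C f ≠ 0 ↔ x f ≠ 0 := by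
    intro f
    constructor
    · intro h hxf
      apply h
      have := hCcast f
      rw [hxf] at this
      simp only [zero_div] at this
      exact_mod_cast this
    · intro h hCf
      apply h
      have := hCcast f
      rw [hCf] at this
      simp only [Int.cast_zero] at this
      have := this.symm
      rcases div_eq_zero_iff.1 this with h | h
      · exact h
      · exact absurd h hxe0
  have hCone : ∀ f, C f ≠ 0 → C f = 1 := by
    intro f hCf
    have hsign : C f ∈ Set.range SignType.cast := by
      have h1 : C f = d * z f := rfl
      rw [h1]
      rcases sign_cases (hzsign f) with h | h | h <;> rcases hdsign with hh | hh <;>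
        apply cases_sign <;> rw [h, hh] <;> norm_num
    have hnonneg : (0 : ℝ) ≤ ((C f : ℤ) : ℝ) := by
      rw [hCcast f]
      exact div_nonneg (hx0 f) (le_of_lt hxe)
    have h0 : (0 : ℤ) ≤ C f := by exact_mod_cast hnonneg
    rcases sign_cases hsign with h | h | h
    · omega
    · exact absurd h hCf
    · exact h
  have hCker : A *ᵥ C = 0 := by
    funext i
    have hcR : ∀ f, ((C f : ℤ) : ℝ) = (x e)⁻¹ * x f := by
      intro f; rw [hCcast f]; field_simp
    have : ((∑ f, A i f * C f : ℤ) : ℝ) = 0 := by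
      rw [cast_rowsum A C i]
      rw [Finset.sum_congr rfl (fun f _ => by rw [hcR f])]
      have : ∀ f, (A.map ((↑) : ℤ → ℝ)) i f * ((x e)⁻¹ * x f) =
          (x e)⁻¹ * (B i f * x f) := by intro f; rw [← hB]; ring
      rw [Finset.sum_congr rfl (fun f _ => this f), ← Finset.mul_sum]
      have h12 := congr_fun hxker i
      have : ∑ f, B i f * x f = 0 := by simpa [Matrix.mulVec, dotProduct, hB] using h12
      rw [this, mul_zero]
    have h13 : (∑ f, A i f * C f : ℤ) = 0 := by exact_mod_cast this
    show ∑ f, A i f * C f = 0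
    exact h13
  refine ⟨C, ⟨?_, ?_, ?_, ?_⟩, by rw [hCe]; norm_num, hCone⟩
  · intro f
    rcases sign_cases (by
      show d * z f ∈ Set.range SignType.cast
      rcases sign_cases (hzsign f) with h | h | h <;> rcases hdsign with hh | hh <;>
        apply cases_sign <;> rw [h, hh] <;> norm_num) with h | h | h
    · exact Or.inl h
    · exact Or.inr (Or.inl h)
    · exact Or.inr (Or.inr h)
  · intro h
    have := congr_fun h e
    rw [hCe] at this
    simp at this
  · exact hCker
  · intro v hv0 hvker hvsupp
    set vR : Fin m → ℝ := fun f => ((v f : ℤ) : ℝ) with hvR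
    have hvRker : B *ᵥ vR = 0 := by
      funext i
      have : ((∑ f, A i f * v f : ℤ) : ℝ) = 0 := by
        have h14 := congr_fun hvker i
        have : (∑ f, A i f * v f : ℤ) = 0 := h14
        rw [this]; simp
      rw [cast_rowsum A v i] at this
      rw [← hB] at this
      exact this
    have hvRsupp : ∀ f, vR f ≠ 0 → x f ≠ 0 := by
      intro f hf
      have hvf : v f ≠ 0 := by
        intro h
        apply hf
        show ((v f : ℤ) : ℝ) = 0
        rw [h]; simp
      have : C f ≠ 0 := hvsupp hvf
      exact (hCsupp f).1 this
    obtain ⟨c₀, hc₀⟩ := hmin vR hvRker hvRsupp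
    have hc₀0 : c₀ ≠ 0 := by
      intro h
      rw [h] at hc₀
      simp only [zero_smul] at hc₀
      apply hv0
      funext f
      have := congr_fun hc₀ f
      rw [hvR] at this
      simp only [Pi.zero_apply] at this ⊢
      exact_mod_cast this
    apply Set.eq_of_subset_of_subset hvsupp
    intro f hf
    have hxf : x f ≠ 0 := (hCsupp f).1 hf
    show v f ≠ 0
    intro h
    have h20 := congr_fun hc₀ f
    have h21 : vR f = ((v f : ℤ) : ℝ) := rfl
    rw [h21, h] at h20
    simp only [Int.cast_zero, Pi.smul_apply, smul_eq_mul] at h20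
    rcases mul_eq_zero.1 h20.symm with h' | h'
    · exact hc₀0 h'
    · exact hxf h'

end Stmt19
namespace Stmt19

lemma det_updateColumn_sum {n : ℕ} (M : Matrix (Fin n) (Fin n) ℤ) (j : Fin n) {ι : Type*}
    (s : Finset ι) (v : ι → Fin n → ℤ) :
    (M.updateCol j (∑ i ∈ s, v i)).det = ∑ i ∈ s, (M.updateCol j (v i)).det := by
  classical
  induction s using Finset.induction with
  | empty =>
    simp only [Finset.sum_empty]
    exact Matrix.det_eq_zero_of_column_eq_zero j (fun i => by rw [Matrix.updateCol_self]; rfl)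
  | insert _ _ h ih =>
    rw [Finset.sum_insert h, Finset.sum_insert h, ← ih, ← Matrix.det_updateCol_add]

lemma cast_colsum {r m : ℕ} (A : Matrix (Fin r) (Fin m) ℤ) (y : Fin r → ℤ) (f : Fin m) :
    ((∑ i, y i * A i f : ℤ) : ℝ) = ∑ i, ((y i : ℤ) : ℝ) * (A.map ((↑) : ℤ → ℝ)) i f := by
  push_cast
  simp [Matrix.map_apply]

lemma cocircuit_side {r m : ℕ} (A : Matrix (Fin r) (Fin m) ℤ) (hTU : A.IsTotallyUnimodular)
    (hrank : (A.map ((↑) : ℤ → ℝ)).rank = r)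
    (e : Fin m) (D : Fin m → ℝ) (yD : Fin r → ℝ) (hyD : D = yD ᵥ* (A.map ((↑) : ℤ → ℝ)))
    (hD0 : ∀ f, 0 ≤ D f) (hDe : 0 < D e)
    (hmin : ∀ v : Fin m → ℝ, (∃ y, v = y ᵥ* (A.map ((↑) : ℤ → ℝ))) → (∀ f, v f ≠ 0 → D f ≠ 0) →
      ∃ c : ℝ, v = c • D) :
    ∃ DD : Fin m → ℤ, IsCocircuit A DD ∧ DD e ≠ 0 ∧ ∀ f, DD f ≠ 0 → DD f = 1 := by
  classical
  set B := A.map ((↑) : ℤ → ℝ) with hB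
  have hrows := rows_indep B hrank
  have hDe0 : D e ≠ 0 := ne_of_gt hDe
  -- r is positive
  have hr0 : r ≠ 0 := by
    intro h
    subst h
    apply hDe0
    rw [hyD]
    show ∑ i : Fin 0, yD i * B i e = 0
    simp
  obtain ⟨t, rfl⟩ : ∃ t, r = t + 1 := ⟨r - 1, by omega⟩
  set K : Finset (Fin m) := Finset.univ.filter (fun f => D f = 0) with hK
  have hKmem : ∀ f, f ∈ K ↔ D f = 0 := by
    intro f; rw [hK, Finset.mem_filter]; simp
  -- the solution space Y
  set Y : Set (Fin (t+1) → ℝ) := {w | ∀ f ∈ K, (w ᵥ* B) f = 0} with hY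
  have hyDY : yD ∈ Y := by
    intro f hf
    rw [← hyD]
    exact (hKmem f).1 hf
  have hyD0 : yD ≠ 0 := by
    intro h
    apply hDe0
    rw [hyD, h, Matrix.zero_vecMul]
    rfl
  have hYpar : ∀ w ∈ Y, ∃ cc : ℝ, w = cc • yD := by
    intro w hw
    obtain ⟨cc, hcc⟩ := hmin (w ᵥ* B) ⟨w, rfl⟩ (by
      intro f hf
      intro hDf
      exact hf (hw f ((hKmem f).2 hDf)))
    refine ⟨cc, ?_⟩
    have : (w - cc • yD) ᵥ* B = 0 := by
      rw [Matrix.sub_vecMul, Matrix.smul_vecMul, ← hyD, ← hcc]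
      simp
    have h2 := hrows _ this
    have h3 := sub_eq_zero.1 h2
    exact h3
  -- column selection inside K
  set wcol : ↥K → (Fin (t+1) → ℝ) := fun v => fun i => B i (v : Fin m) with hwcol
  have hYspan : Submodule.span ℝ (Set.range wcol) = Submodule.span ℝ (Set.range wcol) := rfl
  -- dimension count via the matrix Q
  set Q : Matrix (Fin (t+1)) ↥K ℝ := Matrix.of (fun i v => B i (v : Fin m)) with hQ
  have hkerQ : LinearMap.ker Qᵀ.mulVecLin = Submodule.span ℝ {yD} := by
    apply le_antisymm
    · intro w hw
      rw [LinearMap.mem_ker, Matrix.mulVecLin_apply, Matrix.mulVec_transpose] at hw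
      have hwY : w ∈ Y := by
        intro f hf
        have := congr_fun hw ⟨f, hf⟩
        simp only [Pi.zero_apply] at this
        rw [← this]
        show (w ᵥ* B) f = ∑ i, w i * Q i ⟨f, hf⟩
        rfl
      obtain ⟨cc, hcc⟩ := hYpar w hwY
      rw [hcc]
      exact Submodule.smul_mem _ cc (Submodule.mem_span_singleton_self yD)
    · rw [Submodule.span_le]
      intro w hw
      rw [Set.mem_singleton_iff] at hw
      rw [hw]
      rw [SetLike.mem_coe, LinearMap.mem_ker, Matrix.mulVecLin_apply, Matrix.mulVec_transpose]
      funext v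
      show (yD ᵥ* Q) v = 0
      have : (yD ᵥ* Q) v = (yD ᵥ* B) (v : Fin m) := rfl
      rw [this, ← hyD]
      exact (hKmem _).1 v.2
  have hkerQfr : Module.finrank ℝ (LinearMap.ker Qᵀ.mulVecLin) = 1 := by
    rw [hkerQ]
    exact finrank_span_singleton hyD0
  have hrankQT : Qᵀ.rank = t := by
    have e1 : Module.finrank ℝ (LinearMap.range Qᵀ.mulVecLin) +
        Module.finrank ℝ (LinearMap.ker Qᵀ.mulVecLin) = t + 1 := by
      rw [LinearMap.finrank_range_add_finrank_ker]
      simp [Module.finrank_pi]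
    rw [hkerQfr] at e1
    have : Qᵀ.rank = Module.finrank ℝ (LinearMap.range Qᵀ.mulVecLin) := rfl
    omega
  have hrankQ : Q.rank = t := by rw [← Matrix.rank_transpose]; exact hrankQT
  have hfrQ : Module.finrank ℝ (Submodule.span ℝ (Set.range wcol)) = t := by
    have := Matrix.range_mulVecLin Q
    have hqt : Set.range Q.col = Set.range wcol := by
      apply congrArg
      funext v
      rfl
    rw [hqt] at this
    rw [← this]
    exact hrankQ
  obtain ⟨τ0, hτ0li, hτ0span⟩ := exists_subfamily wcol hfrQ
  set τ : Fin t → Fin m := fun j => ((τ0 j : ↥K) : Fin m) with hτ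
  have hτK : ∀ j, τ j ∈ K := fun j => (τ0 j).2
  set colB : Fin m → (Fin (t+1) → ℝ) := fun f => fun i => B i f with hcolB
  have hτcol : (wcol ∘ τ0) = colB ∘ τ := rfl
  have hτli : LinearIndependent ℝ (colB ∘ τ) := by rw [← hτcol]; exact hτ0li
  -- span of all K-columns is inside span of τ-columns
  have hKspan : ∀ f ∈ K, colB f ∈ Submodule.span ℝ (Set.range (colB ∘ τ)) := by
    intro f hf
    rw [show Set.range (colB ∘ τ) = Set.range (wcol ∘ τ0) from rfl, hτ0span]
    exact Submodule.subset_span ⟨⟨f, hf⟩, rfl⟩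
  -- integer cross-product vector
  set Base : Matrix (Fin (t+1)) (Fin (t+1)) ℤ := A.submatrix id (Fin.snoc τ e) with hBase
  set ei : Fin (t+1) → (Fin (t+1) → ℤ) := fun i => fun j => if i = j then 1 else 0 with hei
  set wz : Fin (t+1) → ℤ := fun i => (Base.updateCol (Fin.last t) (ei i)).det with hwz
  set DD0 : Fin m → ℤ := wz ᵥ* A with hDD0
  have hDD0row : ∀ f, DD0 f = ∑ i, wz i * A i f := fun f => rfl
  -- key determinant formula
  have hkey : ∀ f, DD0 f = (A.submatrix id (Fin.snoc τ f)).det := by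
    intro f
    have hmat : A.submatrix id (Fin.snoc τ f) = Base.updateCol (Fin.last t) (fun i => A i f) := by
      funext i j
      by_cases hj : j = Fin.last t
      · subst hj
        rw [Matrix.updateCol_self]
        show A i ((Fin.snoc τ f : Fin (t+1) → Fin m) (Fin.last t)) = A i f
        rw [Fin.snoc_last]
      · rw [Matrix.updateCol_ne hj]
        obtain ⟨j', rfl⟩ := Fin.exists_castSucc_eq.2 hj
        show A i ((Fin.snoc τ f : Fin (t+1) → Fin m) j'.castSucc) = A i ((Fin.snoc τ e : Fin (t+1) → Fin m) j'.castSucc)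
        rw [Fin.snoc_castSucc, Fin.snoc_castSucc]
    rw [hmat]
    have hcoldecomp : (fun i => A i f) = ∑ i, A i f • ei i :=
      pi_eq_sum_univ (fun i => A i f)
    rw [hcoldecomp, det_updateColumn_sum]
    rw [hDD0row]
    apply Finset.sum_congr rfl
    intro i _
    rw [Matrix.det_updateCol_smul]
    exact mul_comm _ _
  -- sign values
  have hDD0sign : ∀ f, DD0 f ∈ Set.range SignType.cast := by
    intro f
    rw [hkey f]
    exact (Matrix.isTotallyUnimodular_iff A).mp hTU (t+1) id (Fin.snoc τ f)
  -- vanishing on K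
  have hsnocfam : ∀ f, (fun j => (B.submatrix id (Fin.snoc τ f))ᵀ j) =
      Fin.snoc (colB ∘ τ) (colB f) := by
    intro f
    funext j
    refine Fin.lastCases ?_ ?_ j
    · rw [Fin.snoc_last]
      funext i
      show B i ((Fin.snoc τ f : Fin (t+1) → Fin m) (Fin.last t)) = B i f
      rw [Fin.snoc_last]
    · intro j'
      rw [Fin.snoc_castSucc]
      funext i
      show B i ((Fin.snoc τ f : Fin (t+1) → Fin m) j'.castSucc) = B i (τ j')
      rw [Fin.snoc_castSucc]
  have hdetcast : ∀ f, (((A.submatrix id (Fin.snoc τ f)).det : ℤ) : ℝ) =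
      (B.submatrix id (Fin.snoc τ f)).det := by
    intro f
    rw [hB]
    exact RingHom.map_det (Int.castRingHom ℝ) (A.submatrix id (Fin.snoc τ f))
  have hvanK : ∀ f ∈ K, DD0 f = 0 := by
    intro f hf
    rw [hkey f]
    have hdep : ¬ LinearIndependent ℝ (fun j => (B.submatrix id (Fin.snoc τ f))ᵀ j) := by
      rw [hsnocfam f]
      intro hli
      rw [linearIndependent_fin_snoc] at hli
      exact hli.2 (hKspan f hf)
    have hdet0 : (B.submatrix id (Fin.snoc τ f)).det = 0 := by
      by_contra hdet
      exact hdep (Matrix.linearIndependent_cols_iff_isUnit.2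
        ((Matrix.isUnit_iff_isUnit_det _).2 (isUnit_iff_ne_zero.2 hdet)))
    have := hdetcast f
    rw [hdet0] at this
    exact_mod_cast this
  -- some column is not in the span
  have hnonzero : ∃ f, DD0 f ≠ 0 := by
    by_contra hcon
    push_neg at hcon
    have hall : ∀ f, colB f ∈ Submodule.span ℝ (Set.range (colB ∘ τ)) := by
      intro f
      by_contra hnot
      have hli : LinearIndependent ℝ (Fin.snoc (colB ∘ τ) (colB f) : Fin (t+1) → _) :=
        linearIndependent_fin_snoc.2 ⟨hτli, hnot⟩
      have hdet : (B.submatrix id (Fin.snoc τ f)).det ≠ 0 := by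
        have := Matrix.linearIndependent_cols_iff_isUnit (A := B.submatrix id (Fin.snoc τ f)).1 (by show LinearIndependent ℝ (fun j => (B.submatrix id (Fin.snoc τ f))ᵀ j); rw [hsnocfam f]; exact hli)
        exact (Matrix.isUnit_iff_isUnit_det _).1 this |>.ne_zero
      apply hdet
      have := hcon f
      rw [hkey f] at this
      rw [← hdetcast f, this]
      simp
    have hspanB : Submodule.span ℝ (Set.range Bᵀ) ≤ Submodule.span ℝ (Set.range (colB ∘ τ)) := by
      rw [Submodule.span_le]
      rintro _ ⟨f, rfl⟩
      exact hall f
    have hfr1 : Module.finrank ℝ (Submodule.span ℝ (Set.range Bᵀ)) = t + 1 := by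
      rw [show Set.range Bᵀ = Set.range B.col from rfl, ← Matrix.range_mulVecLin B]
      exact hrank
    have hfr2 : Module.finrank ℝ (Submodule.span ℝ (Set.range (colB ∘ τ))) = t := by
      simpa using finrank_span_eq_card hτli
    have := Submodule.finrank_mono hspanB
    omega
  -- cast of DD0 is parallel to D
  set wR : Fin (t+1) → ℝ := fun i => ((wz i : ℤ) : ℝ) with hwR
  have hcastDD0 : ∀ f, ((DD0 f : ℤ) : ℝ) = (wR ᵥ* B) f := by
    intro f
    rw [hDD0row f]
    rw [cast_colsum A wz f]
    rfl
  have hwRY : wR ∈ Y := by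
    intro f hf
    rw [← hcastDD0 f, hvanK f hf]
    simp
  obtain ⟨cc, hcc⟩ := hYpar wR hwRY
  have hDD0D : ∀ f, ((DD0 f : ℤ) : ℝ) = cc * D f := by
    intro f
    rw [hcastDD0 f, hcc, Matrix.smul_vecMul, ← hyD]
    simp
  have hcc0 : cc ≠ 0 := by
    obtain ⟨f, hf⟩ := hnonzero
    intro h
    apply hf
    have := hDD0D f
    rw [h, zero_mul] at this
    exact_mod_cast this
  -- fix sign
  set s0 : ℤ := DD0 e with hs0
  have hs0cast : ((s0 : ℤ) : ℝ) = cc * D e := hDD0D e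
  have hs00 : s0 ≠ 0 := by
    intro h
    rw [h] at hs0cast
    simp only [Int.cast_zero] at hs0cast
    rcases mul_eq_zero.1 hs0cast.symm with h' | h'
    · exact hcc0 h'
    · exact hDe0 h'
  have hs0sign : s0 = -1 ∨ s0 = 1 := by
    rcases sign_cases (hDD0sign e) with h | h | h
    · exact Or.inl h
    · exact absurd h hs00
    · exact Or.inr h
  have hs0s0 : s0 * s0 = 1 := by rcases hs0sign with h | h <;> rw [h] <;> norm_num
  have hposfac : 0 < ((s0 : ℤ) : ℝ) * cc := by
    have h1 : ((s0 : ℤ) : ℝ) * cc * D e = (cc * D e) * (cc * D e) := by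
      rw [show ((s0 : ℤ) : ℝ) * cc * D e = ((s0 : ℤ) : ℝ) * (cc * D e) from by ring, hs0cast]
    have hne : cc * D e ≠ 0 := by
      intro hcd
      apply hs00
      have h2 := hs0cast.trans hcd
      exact_mod_cast h2
    have hsq : 0 < (cc * D e) * (cc * D e) := mul_self_pos.2 hne
    nlinarith [hDe, hsq, h1]
  set DD : Fin m → ℤ := fun f => s0 * DD0 f with hDD
  have hDDcast : ∀ f, ((DD f : ℤ) : ℝ) = (((s0 : ℤ) : ℝ) * cc) * D f := by
    intro f
    show ((s0 * DD0 f : ℤ) : ℝ) = _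
    push_cast
    rw [show (((DD0 f : ℤ)) : ℝ) = cc * D f from hDD0D f]
    ring
  have hDDe : DD e = 1 := by
    show s0 * DD0 e = 1
    rw [← hs0]
    exact hs0s0
  have hDDsupp : ∀ f, DD f ≠ 0 ↔ D f ≠ 0 := by
    intro f
    constructor
    · intro h hDf
      apply h
      have := hDDcast f
      rw [hDf, mul_zero] at this
      exact_mod_cast this
    · intro h hDDf
      apply h
      have := hDDcast f
      rw [hDDf] at this
      simp only [Int.cast_zero] at this
      rcases mul_eq_zero.1 this.symm with h' | h'
      · exact absurd h' (ne_of_gt hposfac)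
      · exact h'
  have hDDone : ∀ f, DD f ≠ 0 → DD f = 1 := by
    intro f hf
    have hsign : DD f ∈ Set.range SignType.cast := by
      show s0 * DD0 f ∈ Set.range SignType.cast
      rcases sign_cases (hDD0sign f) with h | h | h <;> rcases hs0sign with hh | hh <;>
        apply cases_sign <;> rw [h, hh] <;> norm_num
    have hnonneg : (0 : ℝ) ≤ ((DD f : ℤ) : ℝ) := by
      rw [hDDcast f]
      exact mul_nonneg (le_of_lt hposfac) (hD0 f)
    have h0 : (0 : ℤ) ≤ DD f := by exact_mod_cast hnonneg
    rcases sign_cases hsign with h | h | h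
    · omega
    · exact absurd h hf
    · exact h
  refine ⟨DD, ⟨?_, ?_, ⟨s0 • wz, ?_⟩, ?_⟩, by rw [hDDe]; norm_num, hDDone⟩
  · intro f
    have : DD f ∈ Set.range SignType.cast := by
      show s0 * DD0 f ∈ Set.range SignType.cast
      rcases sign_cases (hDD0sign f) with h | h | h <;> rcases hs0sign with hh | hh <;>
        apply cases_sign <;> rw [h, hh] <;> norm_num
    exact sign_cases this
  · intro h
    have := congr_fun h e
    rw [hDDe] at this
    simp at this
  · funext f
    show s0 * DD0 f = ((s0 • wz) ᵥ* A) f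
    rw [hDD0row f]
    show s0 * ∑ i, wz i * A i f = ∑ i, (s0 • wz) i * A i f
    rw [Finset.mul_sum]
    apply Finset.sum_congr rfl
    intro i _
    simp [smul_eq_mul]
    ring
  · intro v hv0 hvrow hvsupp
    obtain ⟨y, hy⟩ := hvrow
    set vR : Fin m → ℝ := fun f => ((v f : ℤ) : ℝ) with hvR
    have hvRrow : vR = (fun i => ((y i : ℤ) : ℝ)) ᵥ* B := by
      funext f
      show ((v f : ℤ) : ℝ) = _
      rw [hy]
      show (((y ᵥ* A) f : ℤ) : ℝ) = _
      rw [show ((y ᵥ* A) f : ℤ) = ∑ i, y i * A i f from rfl, cast_colsum A y f]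
      rfl
    have hvRsupp : ∀ f, vR f ≠ 0 → D f ≠ 0 := by
      intro f hf
      have hvf : v f ≠ 0 := by
        intro h
        apply hf
        show ((v f : ℤ) : ℝ) = 0
        rw [h]; simp
      exact (hDDsupp f).1 (hvsupp hvf)
    obtain ⟨c₀, hc₀⟩ := hmin vR ⟨_, hvRrow⟩ hvRsupp
    have hc₀0 : c₀ ≠ 0 := by
      intro h
      rw [h] at hc₀
      simp only [zero_smul] at hc₀
      apply hv0
      funext f
      have := congr_fun hc₀ f
      have h21 : vR f = ((v f : ℤ) : ℝ) := rfl
      rw [h21] at this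
      simp only [Pi.zero_apply] at this ⊢
      exact_mod_cast this
    apply Set.eq_of_subset_of_subset hvsupp
    intro f hf
    have hDf : D f ≠ 0 := (hDDsupp f).1 hf
    show v f ≠ 0
    intro h
    have h20 := congr_fun hc₀ f
    have h21 : vR f = ((v f : ℤ) : ℝ) := rfl
    rw [h21, h] at h20
    simp only [Int.cast_zero, Pi.smul_apply, smul_eq_mul] at h20
    rcases mul_eq_zero.1 h20.symm with h' | h'
    · exact hc₀0 h'
    · exact hDf h'

end Stmt19
namespace Stmt19

lemma not_both {r m : ℕ} (A : Matrix (Fin r) (Fin m) ℤ) (O : Fin m → ℤ) (hO : IsOrientation O)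
    (e : Fin m) :
    ¬((∃ C, IsCircuit A C ∧ C e ≠ 0 ∧ ∀ f, C f ≠ 0 → O f = C f) ∧
      (∃ D, IsCocircuit A D ∧ D e ≠ 0 ∧ ∀ f, D f ≠ 0 → O f = D f)) := by
  rintro ⟨⟨C, hC, hCe, hCO⟩, ⟨D, hD, hDe, hDO⟩⟩
  obtain ⟨y, hy⟩ := hD.2.2.1
  have hker : A *ᵥ C = 0 := hC.2.2.1
  have hdot : ∑ f, D f * C f = 0 := by
    have h1 : ∑ f, D f * C f = (y ᵥ* A) ⬝ᵥ C := by
      rw [← hy]; rfl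
    rw [h1, ← Matrix.dotProduct_mulVec, hker, dotProduct_zero]
  have hterm : ∀ f, 0 ≤ D f * C f := by
    intro f
    by_cases hDf : D f = 0
    · rw [hDf, zero_mul]
    by_cases hCf : C f = 0
    · rw [hCf, mul_zero]
    · rw [← hDO f hDf, ← hCO f hCf]
      rcases hO f with h | h <;> rw [h] <;> norm_num
  have hpos : 0 < ∑ f, D f * C f := by
    apply Finset.sum_pos' (fun f _ => hterm f)
    refine ⟨e, Finset.mem_univ e, ?_⟩
    rw [← hDO e hDe, ← hCO e hCe]
    rcases hO e with h | h <;> rw [h] <;> norm_num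
  rw [hdot] at hpos
  exact lt_irrefl 0 hpos

lemma circuit_untwist {r m : ℕ} (A : Matrix (Fin r) (Fin m) ℤ) (O : Fin m → ℤ)
    (hO : IsOrientation O) (C' : Fin m → ℤ)
    (h : IsCircuit (Matrix.of fun i f => O f * A i f) C') :
    IsCircuit A (fun f => O f * C' f) := by
  have hO0 : ∀ f, O f ≠ 0 := by
    intro f
    rcases hO f with h' | h' <;> rw [h'] <;> norm_num
  have hOO : ∀ f, O f * O f = 1 := by
    intro f
    rcases hO f with h' | h' <;> rw [h'] <;> norm_num
  obtain ⟨hsv, hne, hker, hmin⟩ := h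
  refine ⟨?_, ?_, ?_, ?_⟩
  · intro f
    show O f * C' f = -1 ∨ O f * C' f = 0 ∨ O f * C' f = 1
    rcases hO f with h1 | h1 <;> rcases hsv f with h2 | h2 | h2 <;> rw [h1, h2] <;> norm_num
  · intro hcon
    obtain ⟨f, hf⟩ : ∃ f, C' f ≠ 0 := by
      by_contra hc
      push_neg at hc
      exact hne (funext hc)
    have := congr_fun hcon f
    simp only [Pi.zero_apply] at this
    exact hf ((mul_eq_zero.1 this).resolve_left (hO0 f))
  · funext i
    have h2 := congr_fun hker i
    simp only [Pi.zero_apply] at h2 ⊢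
    rw [← h2]
    show ∑ f, A i f * (O f * C' f) = ∑ f, (Matrix.of fun i f => O f * A i f) i f * C' f
    apply Finset.sum_congr rfl
    intro f _
    show A i f * (O f * C' f) = (O f * A i f) * C' f
    ring
  · intro v hv0 hvker hvsupp
    set v' : Fin m → ℤ := fun f => O f * v f with hv'
    have hv'0 : v' ≠ 0 := by
      intro hcon
      obtain ⟨f, hf⟩ : ∃ f, v f ≠ 0 := by
        by_contra hc; push_neg at hc; exact hv0 (funext hc)
      have := congr_fun hcon f
      simp only [Pi.zero_apply] at this
      exact hf ((mul_eq_zero.1 this).resolve_left (hO0 f))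
    have hv'ker : (Matrix.of fun i f => O f * A i f) *ᵥ v' = 0 := by
      funext i
      have h2 := congr_fun hvker i
      simp only [Pi.zero_apply] at h2 ⊢
      rw [← h2]
      show ∑ f, (O f * A i f) * (O f * v f) = ∑ f, A i f * v f
      apply Finset.sum_congr rfl
      intro f _
      have : (O f * A i f) * (O f * v f) = (O f * O f) * (A i f * v f) := by ring
      rw [this, hOO f, one_mul]
    have hsuppvv' : ∀ f, v' f ≠ 0 ↔ v f ≠ 0 := by
      intro f
      constructor
      · intro h' hc; exact h' (by rw [hv']; show O f * v f = 0; rw [hc, mul_zero])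
      · intro h' hc; exact h' ((mul_eq_zero.1 hc).resolve_left (hO0 f))
    have hsuppCC' : ∀ f, (O f * C' f) ≠ 0 ↔ C' f ≠ 0 := by
      intro f
      constructor
      · intro h' hc; exact h' (by rw [hc, mul_zero])
      · intro h' hc; exact h' ((mul_eq_zero.1 hc).resolve_left (hO0 f))
    have h3 := hmin v' hv'0 hv'ker (by
      intro f hf
      have : v f ≠ 0 := (hsuppvv' f).1 hf
      exact (hsuppCC' f).1 (hvsupp this))
    apply Set.eq_of_subset_of_subset hvsupp
    intro f hf
    have hC'f : C' f ≠ 0 := (hsuppCC' f).1 hf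
    have : v' f ≠ 0 := by
      rw [Set.ext_iff] at h3
      exact (h3 f).2 hC'f
    exact (hsuppvv' f).1 this

lemma cocircuit_untwist {r m : ℕ} (A : Matrix (Fin r) (Fin m) ℤ) (O : Fin m → ℤ)
    (hO : IsOrientation O) (D' : Fin m → ℤ)
    (h : IsCocircuit (Matrix.of fun i f => O f * A i f) D') :
    IsCocircuit A (fun f => O f * D' f) := by
  have hO0 : ∀ f, O f ≠ 0 := by
    intro f
    rcases hO f with h' | h' <;> rw [h'] <;> norm_num
  have hOO : ∀ f, O f * O f = 1 := by
    intro f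
    rcases hO f with h' | h' <;> rw [h'] <;> norm_num
  obtain ⟨hsv, hne, ⟨y, hy⟩, hmin⟩ := h
  have hvm : ∀ (w : Fin r → ℤ) (f : Fin m), (w ᵥ* (Matrix.of fun i f => O f * A i f)) f
      = O f * (w ᵥ* A) f := by
    intro w f
    show ∑ i, w i * (O f * A i f) = O f * ∑ i, w i * A i f
    rw [Finset.mul_sum]
    apply Finset.sum_congr rfl
    intro i _
    ring
  refine ⟨?_, ?_, ⟨y, ?_⟩, ?_⟩
  · intro f
    show O f * D' f = -1 ∨ O f * D' f = 0 ∨ O f * D' f = 1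
    rcases hO f with h1 | h1 <;> rcases hsv f with h2 | h2 | h2 <;> rw [h1, h2] <;> norm_num
  · intro hcon
    obtain ⟨f, hf⟩ : ∃ f, D' f ≠ 0 := by
      by_contra hc
      push_neg at hc
      exact hne (funext hc)
    have := congr_fun hcon f
    simp only [Pi.zero_apply] at this
    exact hf ((mul_eq_zero.1 this).resolve_left (hO0 f))
  · funext f
    show O f * D' f = (y ᵥ* A) f
    have h2 := congr_fun hy f
    rw [hvm y f] at h2
    rw [h2, ← mul_assoc, hOO f, one_mul]
  · intro v hv0 hvrow hvsupp
    obtain ⟨yv, hyv⟩ := hvrow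
    set v' : Fin m → ℤ := fun f => O f * v f with hv'
    have hsuppvv' : ∀ f, v' f ≠ 0 ↔ v f ≠ 0 := by
      intro f
      constructor
      · intro h' hc; exact h' (by rw [hv']; show O f * v f = 0; rw [hc, mul_zero])
      · intro h' hc; exact h' ((mul_eq_zero.1 hc).resolve_left (hO0 f))
    have hsuppDD' : ∀ f, (O f * D' f) ≠ 0 ↔ D' f ≠ 0 := by
      intro f
      constructor
      · intro h' hc; exact h' (by rw [hc, mul_zero])
      · intro h' hc; exact h' ((mul_eq_zero.1 hc).resolve_left (hO0 f))
    have hv'0 : v' ≠ 0 := by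
      intro hcon
      obtain ⟨f, hf⟩ : ∃ f, v f ≠ 0 := by
        by_contra hc; push_neg at hc; exact hv0 (funext hc)
      have := congr_fun hcon f
      simp only [Pi.zero_apply] at this
      exact hf ((mul_eq_zero.1 this).resolve_left (hO0 f))
    have hv'row : ∃ w, v' = w ᵥ* (Matrix.of fun i f => O f * A i f) := by
      refine ⟨yv, ?_⟩
      funext f
      rw [hvm yv f]
      show O f * v f = O f * (yv ᵥ* A) f
      rw [hyv]
    have h3 := hmin v' hv'0 hv'row (by
      intro f hf
      have : v f ≠ 0 := (hsuppvv' f).1 hf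
      exact (hsuppDD' f).1 (hvsupp this))
    apply Set.eq_of_subset_of_subset hvsupp
    intro f hf
    have hD'f : D' f ≠ 0 := (hsuppDD' f).1 hf
    have : v' f ≠ 0 := by
      rw [Set.ext_iff] at h3
      exact (h3 f).2 hD'f
    exact (hsuppvv' f).1 this

end Stmt19

open Stmt19 in
/-- For every orientation `O` and every element `e`, exactly one of the following holds:
`e` lies in the support of a signed circuit compatible with `O`, or `e` lies in the support
of a signed cocircuit compatible with `O`. -/
theorem stmt19 {r m : ℕ} (A : Matrix (Fin r) (Fin m) ℤ)
    (hTU : A.IsTotallyUnimodular) (hrank : (A.map ((↑) : ℤ → ℝ)).rank = r)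
    (O : Fin m → ℤ) (hO : IsOrientation O) (e : Fin m) :
    Xor' (∃ C : Fin m → ℤ, IsCircuit A C ∧ C e ≠ 0 ∧ ∀ f, C f ≠ 0 → O f = C f)
         (∃ D : Fin m → ℤ, IsCocircuit A D ∧ D e ≠ 0 ∧ ∀ f, D f ≠ 0 → O f = D f) := by
  classical
  have hO0 : ∀ f, O f ≠ 0 := by
    intro f
    rcases hO f with h' | h' <;> rw [h'] <;> norm_num
  have hOO : ∀ f, O f * O f = 1 := by
    intro f
    rcases hO f with h' | h' <;> rw [h'] <;> norm_num
  set A' : Matrix (Fin r) (Fin m) ℤ := Matrix.of (fun i f => O f * A i f) with hA'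
  -- A' is totally unimodular
  have hTU' : A'.IsTotallyUnimodular := by
    rw [Matrix.isTotallyUnimodular_iff]
    intro k f g
    have hsed : A'.submatrix f g = (A.submatrix f g) * Matrix.diagonal (fun j => O (g j)) := by
      funext i j
      rw [Matrix.mul_diagonal]
      show O (g j) * A (f i) (g j) = A (f i) (g j) * O (g j)
      exact mul_comm _ _
    rw [hsed, Matrix.det_mul, Matrix.det_diagonal]
    have hsq : (∏ j, O (g j)) * (∏ j, O (g j)) = 1 := by
      rw [← Finset.prod_mul_distrib]
      rw [Finset.prod_congr rfl (fun j _ => hOO (g j))]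
      exact Finset.prod_const_one
    have hprod : (∏ j, O (g j)) = 1 ∨ (∏ j, O (g j)) = -1 := mul_self_eq_one_iff.1 hsq
    have hdet := sign_cases ((Matrix.isTotallyUnimodular_iff A).mp hTU k f g)
    apply cases_sign
    rcases hdet with h | h | h <;> rcases hprod with h2 | h2 <;> rw [h, h2] <;> norm_num
  -- A' has full rank over ℝ
  set B' : Matrix (Fin r) (Fin m) ℝ := A'.map ((↑) : ℤ → ℝ) with hB'
  have hB'eq : B' = (A.map ((↑) : ℤ → ℝ)) * Matrix.diagonal (fun f => ((O f : ℤ) : ℝ)) := by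
    funext i j
    rw [Matrix.mul_diagonal]
    show ((O j * A i j : ℤ) : ℝ) = ((A i j : ℤ) : ℝ) * ((O j : ℤ) : ℝ)
    push_cast
    ring
  have hrank' : B'.rank = r := by
    rw [hB'eq, Matrix.rank_mul_eq_left_of_isUnit_det _ _ ?_, hrank]
    rw [Matrix.det_diagonal]
    apply isUnit_iff_ne_zero.2
    rw [Finset.prod_ne_zero_iff]
    intro f _
    exact Int.cast_ne_zero.2 (hO0 f)
  -- main dichotomy
  have hmain : (∃ C, IsCircuit A' C ∧ C e ≠ 0 ∧ ∀ f, C f ≠ 0 → C f = 1) ∨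
      (∃ D, IsCocircuit A' D ∧ D e ≠ 0 ∧ ∀ f, D f ≠ 0 → D f = 1) := by
    rcases farkas_matrix B' hrank' e with ⟨x0, hx0ker, hx00, hx0e⟩ | ⟨y0, hy00, hy0e⟩
    · -- kernel case
      set U : Set (Fin m → ℝ) := {x | B' *ᵥ x = 0} with hU
      have hUsub : ∀ u ∈ U, ∀ v ∈ U, u - v ∈ U := by
        intro u hu v hv
        show B' *ᵥ (u - v) = 0
        have h2 : B' *ᵥ (u - v) = B' *ᵥ u - B' *ᵥ v := by
          have := B'.mulVecLin.map_sub u v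
          simpa [Matrix.mulVecLin_apply] using this
        rw [h2]
        rw [show B' *ᵥ u = 0 from hu, show B' *ᵥ v = 0 from hv, sub_zero]
      have hUsmul : ∀ (c : ℝ), ∀ u ∈ U, c • u ∈ U := by
        intro c u hu
        show B' *ᵥ (c • u) = 0
        rw [Matrix.mulVec_smul, show B' *ᵥ u = 0 from hu, smul_zero]
      obtain ⟨x, hxU, hx0', hxe, hxmin⟩ :=
        exists_minimal_support U hUsub hUsmul e x0 hx0ker hx00 hx0e
      obtain ⟨C, hC⟩ := circuit_side A' hTU' e x hxU hx0' hxe (fun v hv => hxmin v hv)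
      exact Or.inl ⟨C, hC⟩
    · -- row space case
      set U : Set (Fin m → ℝ) := {w | ∃ y, w = y ᵥ* B'} with hU
      have hUsub : ∀ u ∈ U, ∀ v ∈ U, u - v ∈ U := by
        rintro _ ⟨y1, rfl⟩ _ ⟨y2, rfl⟩
        exact ⟨y1 - y2, (Matrix.sub_vecMul B' y1 y2).symm⟩
      have hUsmul : ∀ (c : ℝ), ∀ u ∈ U, c • u ∈ U := by
        rintro c _ ⟨y1, rfl⟩
        exact ⟨c • y1, (Matrix.smul_vecMul c y1 B').symm⟩
      obtain ⟨D, hDU, hD0, hDe, hDmin⟩ :=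
        exists_minimal_support U hUsub hUsmul e (y0 ᵥ* B') ⟨y0, rfl⟩ hy00 hy0e
      obtain ⟨yD, hyD⟩ := hDU
      obtain ⟨DD, hDD⟩ := cocircuit_side A' hTU' hrank' e D yD hyD hD0 hDe
        (fun v hv => hDmin v hv)
      exact Or.inr ⟨DD, hDD⟩
  -- translate back
  have htr : (∃ C, IsCircuit A C ∧ C e ≠ 0 ∧ ∀ f, C f ≠ 0 → O f = C f) ∨
      (∃ D, IsCocircuit A D ∧ D e ≠ 0 ∧ ∀ f, D f ≠ 0 → O f = D f) := by
    rcases hmain with ⟨C', hC', hC'e, hC'1⟩ | ⟨D', hD', hD'e, hD'1⟩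
    · refine Or.inl ⟨fun f => O f * C' f, circuit_untwist A O hO C' hC', ?_, ?_⟩
      · exact mul_ne_zero (hO0 e) hC'e
      · intro f hf
        have hC'f : C' f ≠ 0 := fun hc => hf (by show O f * C' f = 0; rw [hc, mul_zero])
        show O f = O f * C' f
        rw [hC'1 f hC'f, mul_one]
    · refine Or.inr ⟨fun f => O f * D' f, cocircuit_untwist A O hO D' hD', ?_, ?_⟩
      · exact mul_ne_zero (hO0 e) hD'e
      · intro f hf
        have hD'f : D' f ≠ 0 := fun hc => hf (by show O f * D' f = 0; rw [hc, mul_zero])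
        show O f = O f * D' f
        rw [hD'1 f hD'f, mul_one]
  have hnb := not_both A O hO e
  rcases htr with hP | hQ
  · exact Or.inl ⟨hP, fun hQ => hnb ⟨hP, hQ⟩⟩
  · exact Or.inr ⟨hQ, fun hP => hnb ⟨hP, hQ⟩⟩
end
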